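/- arXiv:0912.4650 — 4 statements merged into one kernel-verified Lean document; each statement's English description precedes it below -/
import Mathlib

section
/- Let H₁, …, H_k be harmonic on a connected open set Ω, Γ = ⋃_{i≠j} {H_i = H_j}, and let V be subharmonic on Ω, piecewise harmonic with respect to H₁, …, H_k relative to the null set K = supp(ΔV). Then for every connected component U_α of Ω \ Γ there exists an index i(α) with V = H_{i(α)} on all of U_α. -/
open MeasureTheory Metric

/-- A function is harmonic on `s` if near each point of `s` it is the real part of a
holomorphic function. -/
def HarmonicOn (f : ℂ → ℝ) (s : Set ℂ) : Prop :=
  ∀ z ∈ s, ∃ ε > 0, ∃ g : ℂ → ℂ, DifferentiableOn ℂ g (ball z ε) ∧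
    ∀ w ∈ ball z ε ∩ s, f w = (g w).re

/-- Subharmonic: upper semicontinuous and satisfying the sub-mean-value inequality. -/
def SubharmonicOn (f : ℂ → ℝ) (s : Set ℂ) : Prop :=
  UpperSemicontinuousOn f s ∧
    ∀ z ∈ s, ∀ r > 0, closedBall z r ⊆ s →
      f z ≤ (1 / (2 * Real.pi)) * ∫ θ in (0:ℝ)..(2 * Real.pi),
        f (z + r * Complex.exp (θ * Complex.I))

open Set

lemma HarmonicOn.continuousAt' {f : ℂ → ℝ} {Ω : Set ℂ} (hf : HarmonicOn f Ω) (hΩ : IsOpen Ω)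
    {z : ℂ} (hz : z ∈ Ω) : ContinuousAt f z := by
  obtain ⟨ε, hε, g, hg, hfg⟩ := hf z hz
  have h1 : ContinuousAt (fun w => (g w).re) z :=
    Complex.continuous_re.continuousAt.comp
      ((hg.differentiableAt (isOpen_ball.mem_nhds (mem_ball_self hε))).continuousAt)
  apply h1.congr
  filter_upwards [isOpen_ball.mem_nhds (mem_ball_self hε), hΩ.mem_nhds hz] with w h1w h2w
  exact (hfg w ⟨h1w, h2w⟩).symm

lemma HarmonicOn.mvp' {f : ℂ → ℝ} {Ω : Set ℂ} (hf : HarmonicOn f Ω) (hΩ : IsOpen Ω)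
    {z : ℂ} (hz : z ∈ Ω) :
    ∃ ε > 0, ball z ε ⊆ Ω ∧ ∀ ρ : ℝ, 0 < ρ → ρ < ε →
      f z = (1 / (2 * Real.pi)) * ∫ θ in (0:ℝ)..(2*Real.pi),
        f (z + ρ * Complex.exp (θ * Complex.I)) := by
  obtain ⟨ε, hε, g, hg, hfg⟩ := hf z hz
  obtain ⟨ε', hε', hball⟩ := Metric.isOpen_iff.1 (hΩ.inter isOpen_ball) z ⟨hz, mem_ball_self hε⟩
  refine ⟨ε', hε', fun y hy => (hball hy).1, fun ρ hρ hρε => ?_⟩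
  have hsub : closedBall z ρ ⊆ Ω ∩ ball z ε := fun y hy =>
    hball (mem_ball.2 (lt_of_le_of_lt (mem_closedBall.1 hy) hρε))
  have hd : DiffContOnCl ℂ g (ball z ρ) := by
    refine ⟨hg.mono fun y hy => (hsub (ball_subset_closedBall hy)).2, ?_⟩
    refine (hg.continuousOn).mono ?_
    refine (closure_ball_subset_closedBall).trans fun y hy => (hsub hy).2
  have hkey := hd.circleIntegral_sub_inv_smul (mem_ball_self hρ)
  -- rewrite circle integral
  have h2 : (∮ w in C(z, ρ), (w - z)⁻¹ • g w)
      = ∫ θ in (0:ℝ)..(2*Real.pi), Complex.I * g (circleMap z ρ θ) := by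
    rw [circleIntegral]
    congr 1
    ext θ
    rw [deriv_circleMap, circleMap_sub_center, smul_eq_mul, smul_eq_mul]
    have hne : circleMap 0 ρ θ ≠ 0 := by simpa using circleMap_ne_center (c := (0:ℂ)) hρ.ne' (θ := θ)
    field_simp
  have hgc : Continuous fun θ : ℝ => g (circleMap z ρ θ) := by
    refine hg.continuousOn.comp_continuous (continuous_circleMap z ρ) fun θ => ?_
    exact (hsub (sphere_subset_closedBall (circleMap_mem_sphere z hρ.le θ))).2
  have h3 : ∫ θ in (0:ℝ)..(2*Real.pi), Complex.I * g (circleMap z ρ θ)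
      = Complex.I * ∫ θ in (0:ℝ)..(2*Real.pi), g (circleMap z ρ θ) :=
    intervalIntegral.integral_const_mul _ _
  rw [h2, h3, smul_eq_mul] at hkey
  have h4 : (∫ θ in (0:ℝ)..(2*Real.pi), g (circleMap z ρ θ)) = 2 * Real.pi * g z := by
    have hI : (Complex.I : ℂ) ≠ 0 := Complex.I_ne_zero
    apply mul_left_cancel₀ hI
    rw [hkey]
    push_cast
    ring
  -- take real parts
  have h5 : (∫ θ in (0:ℝ)..(2*Real.pi), g (circleMap z ρ θ)).re
      = ∫ θ in (0:ℝ)..(2*Real.pi), (g (circleMap z ρ θ)).re := by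
    exact (Complex.reCLM.intervalIntegral_comp_comm (hgc.intervalIntegrable _ _)).symm
  have h6 : ∀ θ : ℝ, f (z + ρ * Complex.exp (θ * Complex.I)) = (g (circleMap z ρ θ)).re := by
    intro θ
    have hmem : circleMap z ρ θ ∈ closedBall z ρ :=
      sphere_subset_closedBall (circleMap_mem_sphere z hρ.le θ)
    have := hfg (circleMap z ρ θ) ⟨(hsub hmem).2, (hsub hmem).1⟩
    simpa [circleMap] using this
  have h7 : f z = (g z).re := hfg z ⟨mem_ball_self hε, hz⟩
  have hπ : (2 * Real.pi) ≠ 0 := by positivity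
  rw [h7]
  have : ∫ θ in (0:ℝ)..(2*Real.pi), f (z + ρ * Complex.exp (θ * Complex.I))
      = 2 * Real.pi * (g z).re := by
    calc ∫ θ in (0:ℝ)..(2*Real.pi), f (z + ρ * Complex.exp (θ * Complex.I))
        = ∫ θ in (0:ℝ)..(2*Real.pi), (g (circleMap z ρ θ)).re := by
          simp_rw [h6]
      _ = (∫ θ in (0:ℝ)..(2*Real.pi), g (circleMap z ρ θ)).re := h5.symm
      _ = 2 * Real.pi * (g z).re := by rw [h4]; simp
  rw [this]
  field_simp

/-- For a null set K and center x, almost every radius gives a circle meeting K in a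
θ-null set. -/
lemma good_radii' {K : Set ℂ} (hKm : MeasurableSet K) (hK : volume K = 0) (x : ℂ) :
    ∀ᵐ ρ : ℝ, volume {θ : ℝ | 0 < ρ ∧ θ ∈ Set.Ioo 0 (2*Real.pi) ∧
      x + ρ * Complex.exp (θ*Complex.I) ∈ K} = 0 := by
  classical
  set T : ℝ × ℝ → ℂ := fun p => x + p.1 * Complex.exp (p.2 * Complex.I) with hT
  have hTcont : Continuous T := by
    apply continuous_const.add
    exact (Complex.continuous_ofReal.comp continuous_fst).mul
      (Complex.continuous_exp.comp ((Complex.continuous_ofReal.comp continuous_snd).mul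
        continuous_const))
  set s : Set (ℝ × ℝ) := Set.Ioi (0:ℝ) ×ˢ Set.Ioo (0:ℝ) (2*Real.pi) with hs
  have hsm : MeasurableSet s := measurableSet_Ioi.prod measurableSet_Ioo
  set bad : Set (ℝ × ℝ) := s ∩ T ⁻¹' K with hbad
  have hbadm : MeasurableSet bad := hsm.inter (hKm.preimage hTcont.measurable)
  -- the real polar map
  set P : ℝ × ℝ → ℝ × ℝ := fun p => (p.1 * Real.cos p.2, p.1 * Real.sin p.2) with hP
  set B : ℝ × ℝ → ℝ × ℝ →L[ℝ] ℝ × ℝ := fun p =>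
    LinearMap.toContinuousLinearMap (Matrix.toLin (Module.Basis.finTwoProd ℝ) (Module.Basis.finTwoProd ℝ)
      !![Real.cos p.2, -p.1 * Real.sin p.2; Real.sin p.2, p.1 * Real.cos p.2]) with hB
  have hPpolar : P = polarCoord.symm := by
    funext p
    simp [hP, polarCoord]
  have hPd : ∀ p ∈ s, HasFDerivWithinAt P (B p) s p := by
    intro p _
    rw [hPpolar]
    exact (hasFDerivAt_polarCoord_symm p).hasFDerivWithinAt
  have hB_det : ∀ p, (B p).det = p.1 := by
    intro p
    conv_rhs => rw [← one_mul p.1, ← Real.cos_sq_add_sin_sq p.2]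
    simp only [hB, neg_mul, LinearMap.det_toContinuousLinearMap, LinearMap.det_toLin,
      Matrix.det_fin_two_of, sub_neg_eq_add]
    ring
  -- exp description
  have hexp_eq : ∀ θ : ℝ, Complex.exp (θ * Complex.I)
      = Complex.ofReal (Real.cos θ) + Complex.ofReal (Real.sin θ) * Complex.I := by
    intro θ
    rw [Complex.exp_mul_I, Complex.ofReal_cos, Complex.ofReal_sin]
  -- injectivity
  have hinj : Set.InjOn P s := by
    rintro ⟨r₁, θ₁⟩ ⟨hr₁, hθ₁⟩ ⟨r₂, θ₂⟩ ⟨hr₂, hθ₂⟩ h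
    simp only [hP, Prod.mk.injEq] at h
    have hr₁' : (0:ℝ) < r₁ := hr₁
    have hr₂' : (0:ℝ) < r₂ := hr₂
    have habs : r₁ = r₂ := by
      have e₁ := Real.sin_sq_add_cos_sq θ₁
      have e₂ := Real.sin_sq_add_cos_sq θ₂
      have h1 : (r₁ * Real.cos θ₁)^2 + (r₁ * Real.sin θ₁)^2
          = (r₂ * Real.cos θ₂)^2 + (r₂ * Real.sin θ₂)^2 := by rw [h.1, h.2]
      have l1 : (r₁ * Real.cos θ₁)^2 + (r₁ * Real.sin θ₁)^2
          = r₁^2 * (Real.sin θ₁^2 + Real.cos θ₁^2) := by ring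
      have l2 : (r₂ * Real.cos θ₂)^2 + (r₂ * Real.sin θ₂)^2
          = r₂^2 * (Real.sin θ₂^2 + Real.cos θ₂^2) := by ring
      have hsq : r₁^2 = r₂^2 := by
        rw [l1, l2, e₁, e₂, mul_one, mul_one] at h1
        exact h1
      have h2 : (r₁ - r₂) * (r₁ + r₂) = 0 := by linear_combination hsq
      rcases mul_eq_zero.1 h2 with h' | h'
      · linarith
      · linarith
    subst habs
    have hcos : Real.cos θ₁ = Real.cos θ₂ := by
      have := h.1
      exact mul_left_cancel₀ hr₁'.ne' this
    have hsin : Real.sin θ₁ = Real.sin θ₂ := by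
      have := h.2
      exact mul_left_cancel₀ hr₁'.ne' this
    have hexp : Complex.exp (θ₁ * Complex.I) = Complex.exp (θ₂ * Complex.I) := by
      rw [hexp_eq, hexp_eq, hcos, hsin]
    obtain ⟨n, hn⟩ := Complex.exp_eq_exp_iff_exists_int.1 hexp
    have hn' : (θ₁ : ℂ) = θ₂ + n * (2 * Real.pi) := by
      have hI : (Complex.I : ℂ) ≠ 0 := Complex.I_ne_zero
      have : (θ₁ : ℂ) * Complex.I = ((θ₂ : ℂ) + n * (2 * Real.pi)) * Complex.I := by
        rw [hn]; push_cast; ring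
      exact mul_right_cancel₀ hI this
    have hnr : θ₁ = θ₂ + n * (2 * Real.pi) := by exact_mod_cast hn'
    have hθ₁' := hθ₁
    have hθ₂' := hθ₂
    simp only [Set.mem_Ioo] at hθ₁' hθ₂'
    have hn0 : n = 0 := by
      rcases lt_trichotomy (n:ℤ) 0 with hlt | heq | hgt
      · exfalso
        have : (n : ℝ) ≤ -1 := by exact_mod_cast (by omega : n ≤ -1)
        nlinarith [hθ₁'.1, hθ₁'.2, hθ₂'.1, hθ₂'.2, Real.pi_pos]
      · exact heq
      · exfalso
        have : (1 : ℝ) ≤ n := by exact_mod_cast hgt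
        nlinarith [hθ₁'.1, hθ₁'.2, hθ₂'.1, hθ₂'.2, Real.pi_pos]
    ext
    · rfl
    · simp [hnr, hn0]
  -- relate T to P via a measure preserving map
  set e : ℝ × ℝ → ℂ := fun q => x + (q.1 + q.2 * Complex.I) with he
  have hTP : ∀ p : ℝ × ℝ, T p = e (P p) := by
    intro p
    simp only [hT, he, hP, hexp_eq]
    push_cast
    ring
  -- e is measure preserving
  have h1 : MeasurePreserving (⇑Complex.measurableEquivRealProd.symm) volume volume :=
    Complex.volume_preserving_equiv_real_prod.symm Complex.measurableEquivRealProd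
  have hmp : MeasurePreserving e volume volume := by
    have h2 := (measurePreserving_add_left (volume : Measure ℂ) x).comp h1
    have heq : e = (fun z : ℂ => x + z) ∘ ⇑Complex.measurableEquivRealProd.symm := by
      funext q
      simp [he, Complex.measurableEquivRealProd_symm_apply, Function.comp,
        Complex.mk_eq_add_mul_I]
    rw [heq]
    exact h2
  have hK' : volume (e ⁻¹' K) = 0 := by
    rw [hmp.measure_preimage hKm.nullMeasurableSet]
    exact hK
  have hK'm : MeasurableSet (e ⁻¹' K) := hKm.preimage hmp.measurable
  -- change of variables: the weighted integral over s vanishes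
  have hcov := lintegral_image_eq_lintegral_abs_det_fderiv_mul volume hsm hPd hinj
      ((e ⁻¹' K).indicator (fun _ => (1 : ENNReal)))
  have hlhs : (∫⁻ p in P '' s, (e ⁻¹' K).indicator (fun _ => (1:ENNReal)) p) = 0 := by
    have hle : (∫⁻ p in P '' s, (e ⁻¹' K).indicator (fun _ => (1:ENNReal)) p)
        ≤ ∫⁻ p, (e ⁻¹' K).indicator (fun _ => (1:ENNReal)) p := setLIntegral_le_lintegral _ _
    have : (∫⁻ p, (e ⁻¹' K).indicator (fun _ => (1:ENNReal)) p) = volume (e ⁻¹' K) := by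
      rw [lintegral_indicator hK'm]
      simp
    rw [this, hK'] at hle
    exact le_antisymm (le_of_le_of_eq hle rfl) (zero_le)
  rw [hlhs] at hcov
  -- hence the integrand vanishes a.e. on s
  have hmeas : Measurable fun p : ℝ × ℝ =>
      ENNReal.ofReal |(B p).det| * (e ⁻¹' K).indicator (fun _ => (1:ENNReal)) (P p) := by
    apply Measurable.mul
    · apply Measurable.ennreal_ofReal
      apply Measurable.abs
      simp only [hB_det]
      exact measurable_fst
    · apply Measurable.indicator measurable_const
      apply hK'm.preimage
      apply Continuous.measurable
      exact (continuous_fst.mul (Real.continuous_cos.comp continuous_snd)).prodMk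
        (continuous_fst.mul (Real.continuous_sin.comp continuous_snd))
  have hae : ∀ᵐ p ∂(volume.restrict s),
      ENNReal.ofReal |(B p).det| * (e ⁻¹' K).indicator (fun _ => (1:ENNReal)) (P p) = 0 := by
    have h := (lintegral_eq_zero_iff (μ := volume.restrict s) hmeas).1 hcov.symm
    filter_upwards [h] with p hp
    exact hp
  -- bad is null
  have hbadnull : volume bad = 0 := by
    have : ∀ᵐ p ∂(volume.restrict s), p ∉ bad := by
      filter_upwards [hae, ae_restrict_mem hsm] with p hp hps
      intro hpbad
      have hp1 : (0:ℝ) < p.1 := hps.1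
      have hTK : T p ∈ K := hpbad.2
      have hPe : P p ∈ e ⁻¹' K := by
        rw [Set.mem_preimage, ← hTP]
        exact hTK
      rw [Set.indicator_of_mem hPe, mul_one, hB_det] at hp
      have : ENNReal.ofReal |p.1| ≠ 0 := by
        simp [abs_of_pos hp1, hp1]
      exact this hp
    have h0 : volume.restrict s bad = 0 := by
      rw [← measure_eq_zero_iff_ae_notMem] at this
      exact this
    have : volume bad = volume.restrict s bad := by
      rw [Measure.restrict_apply hbadm]
      congr 1
      exact (Set.inter_eq_left.2 (Set.inter_subset_left)).symm
    rw [this, h0]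
  -- slice via Fubini
  have hslice : (fun ρ => volume (Prod.mk ρ ⁻¹' bad)) =ᵐ[volume] 0 := by
    apply (Measure.measure_prod_null hbadm).1
    exact hbadnull
  filter_upwards [hslice] with ρ hρ
  convert hρ using 2
  ext θ
  simp only [Set.mem_setOf_eq, Set.mem_preimage, hbad, Set.mem_inter_iff, Set.mem_prod,
    Set.mem_Ioi, Set.mem_preimage, hT]
  constructor
  · rintro ⟨h1, h2, h3⟩
    exact ⟨⟨h1, h2⟩, h3⟩
  · rintro ⟨⟨h1, h2⟩, h3⟩
    exact ⟨h1, h2, h3⟩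
  rfl

/-- Lemma 2.1: if `V` is piecewise harmonic w.r.t. `H₁, …, H_k` relative to the null set
`K = supp Δ V`, then on each connected component of `Ω \ Γ`, where
`Γ = ⋃_{i≠j} {H i = H j}`, the function `V` equals a single `H i`. -/
theorem eq_single_harmonic_on_components (Ω K : Set ℂ) (hΩ : IsOpen Ω) (hconn : IsConnected Ω)
    (V : ℂ → ℝ) (hV : SubharmonicOn V Ω)
    (k : ℕ) (H : Fin k → ℂ → ℝ) (hH : ∀ i, HarmonicOn (H i) Ω)
    (hdist : ∀ i j, i ≠ j → ∃ z ∈ Ω, H i z ≠ H j z)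
    (hKcl : IsClosed K) (hKnull : volume K = 0)
    (hKsupp : ∀ z ∈ Ω, (z ∈ K ↔ ¬ ∃ ε > 0, ball z ε ⊆ Ω ∧ HarmonicOn V (ball z ε)))
    (hpw : ∀ z ∈ Ω \ K, ∃ j, ∀ w ∈ connectedComponentIn (Ω \ K) z, V w = H j w)
    (Γ : Set ℂ) (hΓ : Γ = {z | ∃ i j, i ≠ j ∧ H i z = H j z}) :
    ∀ z ∈ Ω \ Γ, ∃ i, ∀ w ∈ connectedComponentIn (Ω \ Γ) z, V w = H i w := by
  classical
  subst hΓ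
  have hKm : MeasurableSet K := hKcl.measurableSet
  have hHc : ∀ i : Fin k, ∀ x ∈ Ω, ContinuousAt (H i) x :=
    fun i x hx => (hH i).continuousAt' hΩ hx
  have twopi_pos : (0:ℝ) < 2 * Real.pi := by positivity
  -- distance of circle points
  have hcm_dist : ∀ (x : ℂ) (ρ : ℝ), 0 ≤ ρ → ∀ θ : ℝ,
      dist (x + ρ * Complex.exp (θ*Complex.I)) x = ρ := by
    intro x ρ hρ θ
    rw [Complex.dist_eq]
    have : x + ρ * Complex.exp (θ*Complex.I) - x = ρ * Complex.exp (θ*Complex.I) := by ring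
    rw [this]
    rw [norm_mul, Complex.norm_exp_ofReal_mul_I, Complex.norm_real, Real.norm_eq_abs, abs_of_nonneg hρ, mul_one]
  -- nonempty open sets meet the complement of K
  have hopenK : ∀ U : Set ℂ, IsOpen U → U.Nonempty → (U \ K).Nonempty := by
    intro U hU hUne
    by_contra h
    rw [Set.not_nonempty_iff_eq_empty, Set.diff_eq_empty] at h
    have h1 : (0:ENNReal) < volume U := hU.measure_pos volume hUne
    have h2 : volume U ≤ volume K := measure_mono h
    rw [hKnull] at h2
    exact (lt_irrefl 0 (lt_of_lt_of_le h1 h2)).elim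
  -- good radius in any interval
  have hgoodρ : ∀ (x : ℂ) (a b : ℝ), 0 ≤ a → a < b → ∃ ρ, a < ρ ∧ ρ < b ∧
      volume {θ : ℝ | 0 < ρ ∧ θ ∈ Set.Ioo 0 (2*Real.pi) ∧
        x + ρ * Complex.exp (θ*Complex.I) ∈ K} = 0 := by
    intro x a b ha hab
    have hae := good_radii' hKm hKnull x
    rw [MeasureTheory.ae_iff] at hae
    by_contra h
    push_neg at h
    have hsub : Set.Ioo a b ⊆ {ρ : ℝ | ¬ volume {θ : ℝ | 0 < ρ ∧ θ ∈ Set.Ioo 0 (2*Real.pi) ∧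
        x + ρ * Complex.exp (θ*Complex.I) ∈ K} = 0} := by
      intro ρ hρ
      exact fun hc => (h ρ hρ.1 hρ.2) hc
    have hle := measure_mono (μ := (volume : Measure ℝ)) hsub
    rw [hae, Real.volume_Ioo] at hle
    simp only [nonpos_iff_eq_zero, ENNReal.ofReal_eq_zero] at hle
    linarith
  -- MAIN CLAIM : K does not meet Ω \ Γ
  have CLAIM : ∀ w, w ∈ Ω \ {z | ∃ i j, i ≠ j ∧ H i z = H j z} → w ∉ K := by
    intro w hw hwK
    have hwΩ : w ∈ Ω := hw.1
    have hnotΓ : ∀ i j : Fin k, i ≠ j → H i w ≠ H j w := by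
      intro i j hij h
      exact hw.2 ⟨i, j, hij, h⟩
    -- a ball avoiding Γ
    have hev : ∀ᶠ y in nhds w, y ∈ Ω ∧ ∀ i j : Fin k, i ≠ j → H i y ≠ H j y := by
      have h1 : ∀ᶠ y in nhds w, y ∈ Ω := hΩ.eventually_mem hwΩ
      refine h1.and ?_
      rw [Filter.eventually_all]
      intro i
      rw [Filter.eventually_all]
      intro j
      by_cases hij : i = j
      · exact Filter.Eventually.of_forall (fun y h => absurd hij h)
      · have hc : ContinuousAt (fun y => H i y - H j y) w := (hHc i w hwΩ).sub (hHc j w hwΩ)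
        have hne : H i w - H j w ≠ 0 := sub_ne_zero.2 (hnotΓ i j hij)
        filter_upwards [hc.eventually_ne hne] with y hy _
        intro h
        exact hy (by rw [h]; ring)
    rw [Metric.eventually_nhds_iff_ball] at hev
    obtain ⟨R, hR0, hB⟩ := hev
    set B := ball w R with hBdef
    have hwB : w ∈ B := mem_ball_self hR0
    have hBΩ : B ⊆ Ω := fun y hy => (hB y hy).1
    have hBΓ : ∀ y ∈ B, ∀ i j : Fin k, i ≠ j → H i y ≠ H j y := fun y hy => (hB y hy).2
    have hBconn : IsPreconnected B := (convex_ball w R).isPreconnected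
    -- the pieces
    set O : Fin k → Set ℂ := fun i => {y | y ∈ B ∧ y ∉ K ∧ V y = H i y} with hOdef
    have hOsubB : ∀ i, O i ⊆ B := fun i y hy => hy.1
    have hOdisj : ∀ (i i' : Fin k) (y : ℂ), y ∈ O i → y ∈ O i' → i = i' := by
      intro i i' y hy hy'
      by_contra hne
      exact hBΓ y hy.1 i i' hne (hy.2.2 ▸ hy'.2.2 ▸ rfl)
    have hOcover : ∀ y, y ∈ B → y ∉ K → ∃ i, y ∈ O i := by
      intro y hy hyK
      obtain ⟨i, hi⟩ := hpw y ⟨hBΩ hy, hyK⟩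
      exact ⟨i, hy, hyK, hi y (mem_connectedComponentIn ⟨hBΩ hy, hyK⟩)⟩
    have hOopen : ∀ i, IsOpen (O i) := by
      intro i
      rw [Metric.isOpen_iff]
      intro y hy
      have hyΩK : y ∈ Ω \ K := ⟨hBΩ hy.1, hy.2.1⟩
      have hopen2 : IsOpen (B ∩ (Ω \ K)) := isOpen_ball.inter (hΩ.sdiff hKcl)
      obtain ⟨δ, hδ0, hδsub⟩ := Metric.isOpen_iff.1 hopen2 y ⟨hy.1, hyΩK⟩
      refine ⟨δ, hδ0, fun u hu => ?_⟩
      obtain ⟨i', hi'⟩ := hpw y hyΩK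
      have hii' : i' = i := by
        have h1 : V y = H i' y := hi' y (mem_connectedComponentIn hyΩK)
        have h2 : V y = H i y := hy.2.2
        by_contra hne
        exact hBΓ y hy.1 i' i hne (h1 ▸ h2 ▸ rfl)
      have hball_cc : ball y δ ⊆ connectedComponentIn (Ω \ K) y := by
        apply IsPreconnected.subset_connectedComponentIn (convex_ball y δ).isPreconnected
          (mem_ball_self hδ0)
        exact fun u hu => (hδsub hu).2
      have huB : u ∈ B := (hδsub hu).1
      have huK : u ∉ K := (hδsub hu).2.2
      refine ⟨huB, huK, ?_⟩
      rw [← hii']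
      exact hi' u (hball_cc hu)
    -- the finite set of occurring indices and the maximal one
    set S : Finset (Fin k) := Finset.univ.filter (fun i => (O i).Nonempty) with hSdef
    have hSne : S.Nonempty := by
      obtain ⟨y, hyB, hyK⟩ : (B \ K).Nonempty := hopenK B isOpen_ball ⟨w, hwB⟩
      obtain ⟨i, hi⟩ := hOcover y hyB hyK
      exact ⟨i, Finset.mem_filter.2 ⟨Finset.mem_univ _, ⟨y, hi⟩⟩⟩
    obtain ⟨j, hjS, hjmax⟩ := S.exists_max_image (fun i => H i w) hSne
    have hOjne : (O j).Nonempty := (Finset.mem_filter.1 hjS).2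
    -- strict domination
    have hmax : ∀ i ∈ S, i ≠ j → ∀ y ∈ B, H i y < H j y := by
      intro i hi hij y hy
      have hwlt : H i w < H j w :=
        lt_of_le_of_ne (hjmax i hi) (hnotΓ i j hij)
      by_contra hyc
      push_neg at hyc
      have hcont : ∀ l : Fin k, ContinuousOn (H l) B :=
        fun l x hx => (hHc l x (hBΩ hx)).continuousWithinAt
      obtain ⟨u, huB, hu⟩ := hBconn.intermediate_value₂ hwB hy (hcont i) (hcont j)
        hwlt.le hyc
      exact hBΓ u huB i j hij hu
    -- pointwise bound off K
    have hle_off : ∀ y ∈ B, y ∉ K → V y ≤ H j y := by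
      intro y hy hyK
      obtain ⟨i, hOi⟩ := hOcover y hy hyK
      have hiS : i ∈ S := Finset.mem_filter.2 ⟨Finset.mem_univ _, ⟨y, hOi⟩⟩
      by_cases hij : i = j
      · rw [hOi.2.2, hij]
      · rw [hOi.2.2]
        exact (hmax i hiS hij y hy).le
    -- the measurable representative on good circles
    have core : ∀ x ∈ B, ∀ ρ : ℝ, 0 < ρ → closedBall x ρ ⊆ B →
        volume {θ : ℝ | 0 < ρ ∧ θ ∈ Set.Ioo 0 (2*Real.pi) ∧
          x + ρ * Complex.exp (θ*Complex.I) ∈ K} = 0 →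
        ∃ rep : ℝ → ℝ,
          IntervalIntegrable rep volume 0 (2*Real.pi) ∧
          (∀ᵐ θ : ℝ, θ ∈ Set.Icc 0 (2*Real.pi) →
            (V (x + ρ * Complex.exp (θ*Complex.I)) = rep θ ∧
             rep θ ≤ H j (x + ρ * Complex.exp (θ*Complex.I)))) ∧
          (∀ θ : ℝ, ∀ i : Fin k, (x + ρ * Complex.exp (θ*Complex.I)) ∈ O i →
            rep θ = H i (x + ρ * Complex.exp (θ*Complex.I))) := by
      intro x hx ρ hρ hcb hgood
      set cm : ℝ → ℂ := fun θ => x + ρ * Complex.exp (θ*Complex.I) with hcmdef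
      have hcmB : ∀ θ, cm θ ∈ B := by
        intro θ
        apply hcb
        rw [mem_closedBall, hcm_dist x ρ hρ.le θ]
      have hcmcont : Continuous cm := by
        apply continuous_const.add
        exact continuous_const.mul
          (Complex.continuous_exp.comp ((Complex.continuous_ofReal).mul continuous_const))
      refine ⟨fun θ => ∑ i : Fin k, if cm θ ∈ O i then H i (cm θ) else 0, ?_, ?_, ?_⟩
      · -- interval integrability
        have hIoc0 : Set.Ioc (2*Real.pi) (0:ℝ) = ∅ := Set.Ioc_eq_empty (not_lt.2 (by positivity))
        constructor
        · apply MeasureTheory.integrable_finset_sum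
          intro i _
          have hcontHi : Continuous (fun θ => H i (cm θ)) := by
            apply @Continuous.congr _ _ _ _ _ ((H i) ∘ cm)
            · apply continuous_iff_continuousAt.2
              intro θ
              exact (hHc i (cm θ) (hBΩ (hcmB θ))).comp hcmcont.continuousAt
            · intro θ; rfl
          have hind : (fun θ => if cm θ ∈ O i then H i (cm θ) else 0)
              = Set.indicator (cm ⁻¹' (O i)) (fun θ => H i (cm θ)) := by
            funext θ
            simp [Set.indicator_apply, Set.mem_preimage]
          rw [hind]
          apply MeasureTheory.Integrable.indicator
          · exact (hcontHi.intervalIntegrable 0 (2*Real.pi)).1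
          · exact ((hOopen i).preimage hcmcont).measurableSet
        · rw [IntegrableOn, hIoc0, Measure.restrict_empty]
          exact integrable_zero_measure
      · -- a.e. behaviour on [0, 2π]
        have hbadnull : volume {θ : ℝ | θ ∈ Set.Ioo 0 (2*Real.pi) ∧ cm θ ∈ K} = 0 := by
          have : {θ : ℝ | θ ∈ Set.Ioo 0 (2*Real.pi) ∧ cm θ ∈ K}
              = {θ : ℝ | 0 < ρ ∧ θ ∈ Set.Ioo 0 (2*Real.pi) ∧ cm θ ∈ K} := by
            ext θ; simp [hρ]
          rw [this]
          exact hgood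
        have hends : volume ({0, 2*Real.pi} : Set ℝ) = 0 :=
          Set.Countable.measure_zero
            ((Set.countable_singleton _).insert _) _
        filter_upwards [measure_eq_zero_iff_ae_notMem.1 hbadnull, measure_eq_zero_iff_ae_notMem.1 hends]
          with θ hθbad hθend hθIcc
        have hθIoo : θ ∈ Set.Ioo 0 (2*Real.pi) := by
          rcases eq_or_lt_of_le hθIcc.1 with h0 | h0
          · exact absurd (by simp [← h0] : θ ∈ ({0, 2*Real.pi} : Set ℝ)) hθend
          rcases eq_or_lt_of_le hθIcc.2 with h2 | h2
          · exact absurd (by simp [h2] : θ ∈ ({0, 2*Real.pi} : Set ℝ)) hθend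
          exact ⟨h0, h2⟩
        have hcmK : cm θ ∉ K := fun hc => hθbad ⟨hθIoo, hc⟩
        obtain ⟨i, hOi⟩ := hOcover (cm θ) (hcmB θ) hcmK
        have hiS : i ∈ S := Finset.mem_filter.2 ⟨Finset.mem_univ _, ⟨_, hOi⟩⟩
        have hsum : (∑ i' : Fin k, if cm θ ∈ O i' then H i' (cm θ) else 0) = H i (cm θ) := by
          rw [Finset.sum_eq_single i]
          · rw [if_pos hOi]
          · intro i' _ hne
            rw [if_neg]
            intro hmem
            exact hne (hOdisj i' i (cm θ) hmem hOi)
          · intro h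
            exact absurd (Finset.mem_univ i) h
        constructor
        · rw [hsum]
          exact hOi.2.2
        · rw [hsum]
          by_cases hij : i = j
          · rw [hij]
          · exact (hmax i hiS hij (cm θ) (hcmB θ)).le
      · -- pointwise value on the pieces
        intro θ i hOi
        dsimp only
        rw [Finset.sum_eq_single i]
        · rw [if_pos hOi]
        · intro i' _ hne
          rw [if_neg]
          intro hmem
          exact hne (hOdisj i' i (cm θ) hmem hOi)
        · intro h
          exact absurd (Finset.mem_univ i) h
    have hballB : ∀ x : ℂ, x ∈ B → ∀ ρ : ℝ, ρ < R - dist x w → closedBall x ρ ⊆ B := by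
      intro x hx ρ hρ y hy
      rw [hBdef, mem_ball]
      have h1 : dist y x ≤ ρ := mem_closedBall.1 hy
      calc dist y w ≤ dist y x + dist x w := dist_triangle y x w
        _ < R := by linarith
    have hcmcont : ∀ (x : ℂ) (ρ : ℝ), Continuous (fun θ : ℝ => x + ρ * Complex.exp (θ*Complex.I)) := by
      intro x ρ
      apply continuous_const.add
      exact continuous_const.mul
        (Complex.continuous_exp.comp ((Complex.continuous_ofReal).mul continuous_const))
    have StepA : ∀ x ∈ B, V x ≤ H j x := by
      intro x hx
      by_cases hxK : x ∈ K
      swap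
      · exact hle_off x hx hxK
      obtain ⟨ε, hε, hballΩ, hmvp⟩ := (hH j).mvp' hΩ (hBΩ hx)
      have hdw : dist x w < R := mem_ball.1 hx
      have hδpos : 0 < min ε (R - dist x w) := lt_min hε (by linarith)
      obtain ⟨ρ, hρ0, hρlt, hρgood⟩ := hgoodρ x 0 (min ε (R - dist x w)) le_rfl hδpos
      have hρε : ρ < ε := lt_of_lt_of_le hρlt (min_le_left _ _)
      have hρR : ρ < R - dist x w := lt_of_lt_of_le hρlt (min_le_right _ _)
      have hcbB : closedBall x ρ ⊆ B := hballB x hx ρ hρR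
      obtain ⟨rep, hrepint, hrepae, hrepO⟩ := core x hx ρ hρ0 hcbB hρgood
      set cm : ℝ → ℂ := fun θ => x + ρ * Complex.exp (θ*Complex.I) with hcmdef
      have hcmB : ∀ θ, cm θ ∈ B := fun θ =>
        hcbB (by rw [mem_closedBall, hcm_dist x ρ hρ0.le θ])
      have hVcm_int : IntervalIntegrable (fun θ => V (cm θ)) volume 0 (2*Real.pi) := by
        constructor
        · apply hrepint.1.congr
          apply (ae_restrict_iff' measurableSet_Ioc).2
          filter_upwards [hrepae] with θ hθ hθIoc
          exact (hθ (Set.Ioc_subset_Icc_self hθIoc)).1.symm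
        · rw [IntegrableOn, Set.Ioc_eq_empty (not_lt.2 (by positivity)), Measure.restrict_empty]
          exact integrable_zero_measure
      have hHj_cont : Continuous fun θ => H j (cm θ) := by
        apply continuous_iff_continuousAt.2
        intro θ
        exact (hHc j (cm θ) (hBΩ (hcmB θ))).comp (hcmcont x ρ).continuousAt
      have hHj_int : IntervalIntegrable (fun θ => H j (cm θ)) volume 0 (2*Real.pi) :=
        hHj_cont.intervalIntegrable _ _
      have h1 : V x ≤ (1 / (2*Real.pi)) * ∫ θ in (0:ℝ)..(2*Real.pi), V (cm θ) :=
        hV.2 x (hBΩ hx) ρ hρ0 (fun y hy => hBΩ (hcbB hy))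
      have h2 : (∫ θ in (0:ℝ)..(2*Real.pi), V (cm θ))
          ≤ ∫ θ in (0:ℝ)..(2*Real.pi), H j (cm θ) := by
        apply intervalIntegral.integral_mono_ae_restrict twopi_pos.le hVcm_int hHj_int
        apply (ae_restrict_iff' measurableSet_Icc).2
        filter_upwards [hrepae] with θ hθ hθIcc
        have h := hθ hθIcc
        calc V (cm θ) = rep θ := h.1
          _ ≤ H j (cm θ) := h.2
      have h3 := hmvp ρ hρ0 hρε
      calc V x ≤ (1/(2*Real.pi)) * ∫ θ in (0:ℝ)..(2*Real.pi), V (cm θ) := h1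
        _ ≤ (1/(2*Real.pi)) * ∫ θ in (0:ℝ)..(2*Real.pi), H j (cm θ) :=
            mul_le_mul_of_nonneg_left h2 (by positivity)
        _ = H j x := h3.symm
    -- upper semicontinuity forces equality at accumulation points of the j-piece
    have husc_eq : ∀ x ∈ B,
        (∀ γ > 0, ∃ y, y ∈ B ∧ y ∉ K ∧ V y = H j y ∧ dist y x < γ) → V x = H j x := by
      intro x hx hnear
      refine le_antisymm (StepA x hx) ?_
      by_contra hlt
      push_neg at hlt
      set c := (V x + H j x) / 2 with hcdef
      have hc1 : V x < c := by rw [hcdef]; linarith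
      have hc2 : c < H j x := by rw [hcdef]; linarith
      have husc := hV.1 x (hBΩ hx) c hc1
      rw [nhdsWithin_eq_nhds.2 (hΩ.mem_nhds (hBΩ hx))] at husc
      have hHev : ∀ᶠ y in nhds x, c < H j y :=
        (hHc j x (hBΩ hx)).eventually_mem (Ioi_mem_nhds hc2)
      obtain ⟨γ, hγ0, hγ⟩ := Metric.eventually_nhds_iff_ball.1 (husc.and hHev)
      obtain ⟨y, hyB, hyK, hyV, hyd⟩ := hnear γ hγ0
      have := hγ y (mem_ball.2 hyd)
      beta_reduce at this
      rw [hyV] at this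
      exact absurd this.2 (not_lt.2 this.1.le)
    -- the clopen set where the index is j
    set W : Set ℂ := {x | x ∈ B ∧ ∃ δ > 0, ball x δ ⊆ B ∧
      ∀ y ∈ ball x δ, y ∉ K → V y = H j y} with hWdef
    have hWopen : IsOpen W := by
      rw [Metric.isOpen_iff]
      rintro x ⟨hxB, δ, hδ0, hδB, hδprop⟩
      refine ⟨δ/2, by linarith, ?_⟩
      intro x' hx'
      have hsub2 : ball x' (δ/2) ⊆ ball x δ := by
        intro u hu
        rw [mem_ball] at *
        calc dist u x ≤ dist u x' + dist x' x := dist_triangle _ _ _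
          _ < δ := by linarith
      have hx'B : x' ∈ B := hδB (mem_ball.2 (by
        have := mem_ball.1 hx'; linarith))
      exact ⟨hx'B, δ/2, by linarith, hsub2.trans hδB,
        fun y hy hyK => hδprop y (hsub2 hy) hyK⟩
    have hWne : (B ∩ W).Nonempty := by
      obtain ⟨x₀, hx₀⟩ := hOjne
      obtain ⟨δ₀, hδ₀0, hδ₀⟩ := Metric.isOpen_iff.1 (hOopen j) x₀ hx₀
      exact ⟨x₀, hOsubB j hx₀, hOsubB j hx₀, δ₀, hδ₀0, hδ₀.trans (hOsubB j),
        fun y hy _ => (hδ₀ hy).2.2⟩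
    have hWclosure : closure W ∩ B ⊆ W := by
      rintro x ⟨hxc, hxB⟩
      have hnear : ∀ γ > 0, ∃ y, y ∈ B ∧ y ∉ K ∧ V y = H j y ∧ dist y x < γ := by
        intro γ hγ0
        obtain ⟨x', hx'W, hx'd⟩ := Metric.mem_closure_iff.1 hxc (γ/2) (by linarith)
        obtain ⟨hx'B, δ, hδ0, hδB, hδprop⟩ := hx'W
        have hγ'0 : 0 < min (γ/2) δ := lt_min (by linarith) hδ0
        obtain ⟨y, hyb, hyK⟩ := hopenK (ball x' (min (γ/2) δ)) isOpen_ball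
          ⟨x', mem_ball_self hγ'0⟩
        have hyδ : y ∈ ball x' δ :=
          mem_ball.2 (lt_of_lt_of_le (mem_ball.1 hyb) (min_le_right _ _))
        refine ⟨y, hδB hyδ, hyK, hδprop y hyδ hyK, ?_⟩
        have h1 : dist y x' < γ/2 := lt_of_lt_of_le (mem_ball.1 hyb) (min_le_left _ _)
        have h2 : dist x x' < γ/2 := hx'd
        calc dist y x ≤ dist y x' + dist x' x := dist_triangle _ _ _
          _ < γ := by rw [dist_comm x' x] at *; linarith [dist_comm x x' ▸ h2]
      have hVx : V x = H j x := husc_eq x hxB hnear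
      obtain ⟨ε, hε, hballΩ, hmvp⟩ := (hH j).mvp' hΩ (hBΩ hxB)
      have hdw : dist x w < R := mem_ball.1 hxB
      have hδ'0 : 0 < min ε (R - dist x w) := lt_min hε (by linarith)
      have hδ'B : ball x (min ε (R - dist x w)) ⊆ B := by
        intro u hu
        rw [hBdef, mem_ball]
        have h1 : dist u x < R - dist x w := lt_of_lt_of_le (mem_ball.1 hu) (min_le_right _ _)
        calc dist u w ≤ dist u x + dist x w := dist_triangle _ _ _
          _ < R := by linarith
      refine ⟨hxB, min ε (R - dist x w), hδ'0, hδ'B, ?_⟩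
      intro y hy hyK
      by_contra hne
      obtain ⟨i0, hOi0⟩ := hOcover y (hδ'B hy) hyK
      have hi0S : i0 ∈ S := Finset.mem_filter.2 ⟨Finset.mem_univ _, ⟨y, hOi0⟩⟩
      have hi0j : i0 ≠ j := fun h => hne (by rw [hOi0.2.2, h])
      have hyx : y ≠ x := by
        intro h
        apply hne
        rw [h, hVx]
      have hρ00 : 0 < dist y x := dist_pos.2 hyx
      have hρ0δ' : dist y x < min ε (R - dist x w) := mem_ball.1 hy
      obtain ⟨η1, hη10, hη1⟩ := Metric.isOpen_iff.1 ((hOopen i0).inter isOpen_ball) y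
        ⟨hOi0, hy⟩
      have hη0 : 0 < min η1 (dist y x) := lt_min hη10 hρ00
      have hηρ0 : min η1 (dist y x) ≤ dist y x := min_le_right _ _
      have hηsub : ball y (min η1 (dist y x)) ⊆ O i0 ∩ ball x (min ε (R - dist x w)) :=
        fun u hu => hη1 (mem_ball.2 (lt_of_lt_of_le (mem_ball.1 hu) (min_le_left _ _)))
      obtain ⟨ρ, hρa, hρb, hρgood⟩ := hgoodρ x (dist y x - (min η1 (dist y x))/2) (dist y x)
        (by linarith) (by linarith)
      have hρ0' : (0:ℝ) < ρ := by linarith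
      have hρδ' : ρ < min ε (R - dist x w) := lt_trans hρb hρ0δ'
      have hρε : ρ < ε := lt_of_lt_of_le hρδ' (min_le_left _ _)
      have hcbB : closedBall x ρ ⊆ B := by
        intro u hu
        apply hδ'B
        rw [mem_ball]
        exact lt_of_le_of_lt (mem_closedBall.1 hu) hρδ'
      obtain ⟨rep, hrepint, hrepae, hrepO⟩ := core x hxB ρ hρ0' hcbB hρgood
      set cm : ℝ → ℂ := fun θ => x + ρ * Complex.exp (θ*Complex.I) with hcmdef
      have hcmB : ∀ θ, cm θ ∈ B := fun θ =>
        hcbB (by rw [mem_closedBall, hcm_dist x ρ hρ0'.le θ])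
      have hVcm_int : IntervalIntegrable (fun θ => V (cm θ)) volume 0 (2*Real.pi) := by
        constructor
        · apply hrepint.1.congr
          apply (ae_restrict_iff' measurableSet_Ioc).2
          filter_upwards [hrepae] with θ hθ hθIoc
          exact (hθ (Set.Ioc_subset_Icc_self hθIoc)).1.symm
        · rw [IntegrableOn, Set.Ioc_eq_empty (not_lt.2 (by positivity)), Measure.restrict_empty]
          exact integrable_zero_measure
      have hHj_cont : Continuous fun θ => H j (cm θ) := by
        apply continuous_iff_continuousAt.2
        intro θ
        exact (hHc j (cm θ) (hBΩ (hcmB θ))).comp (hcmcont x ρ).continuousAt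
      have hHj_int : IntervalIntegrable (fun θ => H j (cm θ)) volume 0 (2*Real.pi) :=
        hHj_cont.intervalIntegrable _ _
      have h1 : V x ≤ (1 / (2*Real.pi)) * ∫ θ in (0:ℝ)..(2*Real.pi), V (cm θ) :=
        hV.2 x (hBΩ hxB) ρ hρ0' (fun u hu => hBΩ (hcbB hu))
      have h3 := hmvp ρ hρ0' hρε
      have hVrep : (∫ θ in (0:ℝ)..(2*Real.pi), V (cm θ))
          = ∫ θ in (0:ℝ)..(2*Real.pi), rep θ := by
        apply intervalIntegral.integral_congr_ae
        filter_upwards [hrepae] with θ hθ hmem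
        rw [Set.uIoc_of_le twopi_pos.le] at hmem
        exact (hθ (Set.Ioc_subset_Icc_self hmem)).1
      set g : ℝ → ℝ := fun θ => H j (cm θ) - rep θ with hgdef
      have hgint : IntervalIntegrable g volume 0 (2*Real.pi) := hHj_int.sub hrepint
      have hgnonneg_Ioc : 0 ≤ᵐ[volume.restrict (Set.Ioc 0 (2*Real.pi))] g := by
        apply (ae_restrict_iff' measurableSet_Ioc).2
        filter_upwards [hrepae] with θ hθ hIoc
        exact sub_nonneg.2 (hθ (Set.Ioc_subset_Icc_self hIoc)).2
      have hg0 : (∫ θ in (0:ℝ)..(2*Real.pi), g θ) = 0 := by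
        have hInt1 : (∫ θ in (0:ℝ)..(2*Real.pi), g θ)
            = (∫ θ in (0:ℝ)..(2*Real.pi), H j (cm θ)) - ∫ θ in (0:ℝ)..(2*Real.pi), rep θ :=
          intervalIntegral.integral_sub hHj_int hrepint
        have hHjval : (∫ θ in (0:ℝ)..(2*Real.pi), H j (cm θ)) = 2*Real.pi * H j x := by
          have hπ : (2*Real.pi) ≠ 0 := twopi_pos.ne'
          rw [h3]
          field_simp
          rfl
        have hVval : 2*Real.pi * V x ≤ ∫ θ in (0:ℝ)..(2*Real.pi), V (cm θ) := by
          have := mul_le_mul_of_nonneg_left h1 twopi_pos.le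
          calc 2*Real.pi * V x ≤ 2*Real.pi * ((1 / (2*Real.pi)) *
                ∫ θ in (0:ℝ)..(2*Real.pi), V (cm θ)) := this
            _ = ∫ θ in (0:ℝ)..(2*Real.pi), V (cm θ) := by
                field_simp
        apply le_antisymm
        · rw [hInt1, hHjval, ← hVrep]
          rw [← hVx]
          linarith
        · exact intervalIntegral.integral_nonneg_of_ae_restrict twopi_pos.le
            ((ae_restrict_iff' measurableSet_Icc).2
              (hrepae.mono fun θ hθ hIcc => sub_nonneg.2 (hθ hIcc).2))
      have hgz : g =ᵐ[volume.restrict (Set.Ioc 0 (2*Real.pi))] 0 :=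
        (intervalIntegral.integral_eq_zero_iff_of_le_of_nonneg_ae twopi_pos.le
          hgnonneg_Ioc hgint).1 hg0
      -- build an arc of positive measure where g < 0
      have hyeq : (y : ℂ) - x
          = ((dist y x : ℝ) : ℂ) * Complex.exp ((Complex.arg (y - x)) * Complex.I) := by
        have habs := Complex.norm_mul_exp_arg_mul_I (y - x)
        have hd : ‖y - x‖ = dist y x := (Complex.dist_eq y x).symm
        rw [hd] at habs
        exact habs.symm
      set θ0 := Complex.arg (y - x) with hθ0def
      set n : ℤ := ⌊θ0 / (2*Real.pi)⌋ with hndef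
      set θ1 : ℝ := θ0 - 2*Real.pi*n with hθ1def
      have hθ1mem : θ1 ∈ Set.Ico 0 (2*Real.pi) := by
        constructor
        · have h5 := Int.floor_le (θ0 / (2*Real.pi))
          have h6 : (n:ℝ) * (2*Real.pi) ≤ θ0 := by
            rw [hndef]
            calc (⌊θ0 / (2*Real.pi)⌋ : ℝ) * (2*Real.pi) ≤ (θ0 / (2*Real.pi)) * (2*Real.pi) :=
              mul_le_mul_of_nonneg_right h5 twopi_pos.le
              _ = θ0 := by field_simp
          rw [hθ1def]
          linarith
        · have h5 := Int.lt_floor_add_one (θ0 / (2*Real.pi))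
          have h6 : θ0 < ((n:ℝ) + 1) * (2*Real.pi) := by
            rw [hndef]
            calc θ0 = (θ0 / (2*Real.pi)) * (2*Real.pi) := by field_simp
              _ < ((⌊θ0 / (2*Real.pi)⌋ : ℝ) + 1) * (2*Real.pi) :=
                mul_lt_mul_of_pos_right h5 twopi_pos
          rw [hθ1def]
          nlinarith
      have hexp1 : Complex.exp (θ1 * Complex.I) = Complex.exp (θ0 * Complex.I) := by
        have heq : (θ1 : ℂ) * Complex.I = θ0 * Complex.I - n * (2*Real.pi*Complex.I) := by
          rw [hθ1def]
          push_cast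
          ring
        rw [heq, Complex.exp_sub, Complex.exp_int_mul_two_pi_mul_I, div_one]
      have hcmθ1 : cm θ1 ∈ ball y ((min η1 (dist y x))/2) := by
        rw [mem_ball, Complex.dist_eq]
        have hsubeq : cm θ1 - y = ((ρ - dist y x : ℝ) : ℂ) * Complex.exp (θ0 * Complex.I) := by
          calc cm θ1 - y = ρ * Complex.exp (θ0 * Complex.I) - ((y : ℂ) - x) := by
                rw [hcmdef]
                dsimp only
                rw [hexp1]
                ring
            _ = ρ * Complex.exp (θ0 * Complex.I)
                - ((dist y x : ℝ) : ℂ) * Complex.exp (θ0 * Complex.I) := by rw [hyeq]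
            _ = ((ρ - dist y x : ℝ) : ℂ) * Complex.exp (θ0 * Complex.I) := by
                push_cast
                ring
        rw [hsubeq, norm_mul, Complex.norm_exp_ofReal_mul_I, mul_one, Complex.norm_real, Real.norm_eq_abs]
        rw [abs_of_nonpos (by linarith)]
        linarith
      set P : Set ℝ := (fun θ : ℝ => x + ρ * Complex.exp (θ*Complex.I)) ⁻¹'
        (ball y ((min η1 (dist y x))/2)) with hPdef
      have hPopen : IsOpen P := isOpen_ball.preimage (hcmcont x ρ)
      have hθ1P : θ1 ∈ P := hcmθ1
      have hexistst : ∃ t, t ∈ P ∩ Set.Ioo 0 (2*Real.pi) := by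
        rcases eq_or_lt_of_le hθ1mem.1 with h0 | h0
        · obtain ⟨τ, hτ0, hτ⟩ := Metric.isOpen_iff.1 hPopen θ1 hθ1P
          refine ⟨min (τ/2) Real.pi, hτ ?_, ?_, ?_⟩
          · rw [mem_ball, Real.dist_eq, ← h0, sub_zero]
            rw [abs_of_pos (lt_min (by linarith) Real.pi_pos)]
            exact lt_of_le_of_lt (min_le_left _ _) (by linarith)
          · exact lt_min (by linarith) Real.pi_pos
          · calc min (τ/2) Real.pi ≤ Real.pi := min_le_right _ _
              _ < 2*Real.pi := by linarith [Real.pi_pos]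
        · exact ⟨θ1, hθ1P, h0, hθ1mem.2⟩
      obtain ⟨t, htP, htIoo⟩ := hexistst
      have hAopen : IsOpen (P ∩ Set.Ioo 0 (2*Real.pi)) := hPopen.inter isOpen_Ioo
      have hAvol : 0 < volume (P ∩ Set.Ioo 0 (2*Real.pi)) :=
        hAopen.measure_pos volume ⟨t, htP, htIoo⟩
      have hAne : ∀ θ ∈ P ∩ Set.Ioo 0 (2*Real.pi), ¬ g θ = 0 := by
        rintro θ ⟨hθP, _⟩
        have hballsub : ball y ((min η1 (dist y x))/2) ⊆ ball y (min η1 (dist y x)) :=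
          ball_subset_ball (by linarith)
        have hcmO : cm θ ∈ O i0 := (hηsub (hballsub hθP)).1
        have hval : rep θ = H i0 (cm θ) := hrepO θ i0 hcmO
        have hlt : H i0 (cm θ) < H j (cm θ) := hmax i0 hi0S hi0j (cm θ) (hcmB θ)
        rw [hgdef]
        dsimp only
        rw [hval]
        intro hc
        rw [sub_eq_zero] at hc
        exact absurd hc.symm (ne_of_lt hlt)
      have h0 : (volume.restrict (Set.Ioc 0 (2*Real.pi))) {θ | ¬ g θ = 0} = 0 := by
        have h5 : {θ : ℝ | ¬ g θ = 0} = {θ : ℝ | ¬ g θ = (0 : ℝ → ℝ) θ} := by rfl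
        rw [h5]
        exact hgz
      have hle : (volume.restrict (Set.Ioc 0 (2*Real.pi))) (P ∩ Set.Ioo 0 (2*Real.pi)) = 0 := by
        apply le_antisymm _ (zero_le)
        rw [← h0]
        exact measure_mono (fun θ hθ => hAne θ hθ)
      have hAIoc : (volume.restrict (Set.Ioc 0 (2*Real.pi))) (P ∩ Set.Ioo 0 (2*Real.pi))
          = volume (P ∩ Set.Ioo 0 (2*Real.pi)) := by
        rw [Measure.restrict_apply hAopen.measurableSet]
        congr 1
        apply Set.inter_eq_left.2
        exact fun θ hθ => Set.Ioo_subset_Ioc_self hθ.2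
      rw [hAIoc] at hle
      rw [hle] at hAvol
      exact lt_irrefl 0 hAvol
    -- conclude : V = H j on B, so V is harmonic near w, contradiction with w ∈ K
    have hBW : B ⊆ W := hBconn.subset_of_closure_inter_subset hWopen hWne hWclosure
    have hVeq : ∀ x ∈ B, V x = H j x := by
      intro x hx
      obtain ⟨_, δ, hδ0, hδB, hδprop⟩ := hBW hx
      by_cases hxK : x ∈ K
      · apply husc_eq x hx
        intro γ hγ0
        obtain ⟨y, hyb, hyK⟩ := hopenK (ball x (min γ δ)) isOpen_ball
          ⟨x, mem_ball_self (lt_min hγ0 hδ0)⟩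
        have hyδ : y ∈ ball x δ :=
          mem_ball.2 (lt_of_lt_of_le (mem_ball.1 hyb) (min_le_right _ _))
        exact ⟨y, hδB hyδ, hyK, hδprop y hyδ hyK,
          lt_of_lt_of_le (mem_ball.1 hyb) (min_le_left _ _)⟩
      · exact hδprop x (mem_ball_self hδ0) hxK
    have hharm : HarmonicOn V B := by
      intro x hx
      obtain ⟨ε, hε, g, hg, hfg⟩ := hH j x (hBΩ hx)
      refine ⟨ε, hε, g, hg, ?_⟩
      intro u hu
      rw [hVeq u hu.2]
      exact hfg u ⟨hu.1, hBΩ hu.2⟩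
    exact (hKsupp w hwΩ).1 hwK ⟨R, hR0, hBΩ, hharm⟩
  -- conclusion from the claim
  intro z hz
  have hzK : z ∉ K := CLAIM z hz
  obtain ⟨j, hj⟩ := hpw z ⟨hz.1, hzK⟩
  refine ⟨j, fun w hw => hj w ?_⟩
  have hsub : connectedComponentIn (Ω \ {z | ∃ i j, i ≠ j ∧ H i z = H j z}) z ⊆ Ω \ K :=
    fun u hu => ⟨(connectedComponentIn_subset _ _ hu).1,
      CLAIM u (connectedComponentIn_subset _ _ hu)⟩
  exact (isPreconnected_connectedComponentIn.subset_connectedComponentIn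
    (mem_connectedComponentIn hz) hsub) hw
end

section
/- Let H be a nonconstant harmonic function on a disk D centered at 0 in ℂ with H(0) = 0, and write H = Re(g) with g ∈ 𝒪(D), g vanishing to order m ≥ 1 at 0. Then there is a conformal map ρ from a disk in the ζ-plane onto a neighborhood of 0 with g(ρ(ζ)) = ζ^m, and consequently, after shrinking D, the zero set {H = 0} is a union of m smooth real-analytic curves through the origin, and D \ {H = 0} has exactly 2m connected components, each a real-analytic sector with opening angle π/m at 0. -/
open MeasureTheory Metric

noncomputable section

namespace HZSaux

open Complex Set

/-- The open sector of half-angle `π/(2m)` around direction `kπ/m`. -/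
def Sec (m k : ℕ) : Set ℂ :=
  {ζ | ‖ζ‖ * Real.cos (Real.pi / (2 * m)) <
      (Complex.exp (↑(-(k * Real.pi / m)) * Complex.I) * ζ).re}

variable {m k : ℕ}

lemma beta_pos (hm : 1 ≤ m) : 0 < Real.pi / (2 * m) := by
  apply div_pos Real.pi_pos
  positivity

lemma beta_le (hm : 1 ≤ m) : Real.pi / (2 * m) ≤ Real.pi / 2 := by
  apply div_le_div_of_nonneg_left Real.pi_pos.le (by norm_num)
  have : (1 : ℝ) ≤ (m : ℝ) := by exact_mod_cast hm
  linarith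

lemma mem_Sec_iff (hm : 1 ≤ m) {ζ : ℂ} :
    ζ ∈ Sec m k ↔ ∃ r : ℝ, 0 < r ∧ ∃ θ : ℝ,
      |θ - k * Real.pi / m| < Real.pi / (2 * m) ∧ ζ = ↑r * Complex.exp (↑θ * Complex.I) := by
  have hβpos := beta_pos hm
  have hβle : Real.pi / (2 * m) ≤ Real.pi := (beta_le hm).trans (by linarith [Real.pi_pos])
  constructor
  · intro hζ
    have hζ0 : ζ ≠ 0 := by
      rintro rfl
      simp [Sec] at hζ
    set A := Complex.exp (↑(-(k * Real.pi / m)) * Complex.I) with hA_def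
    have hA : ‖A‖ = 1 := Complex.norm_exp_ofReal_mul_I _
    have hξ0 : A * ζ ≠ 0 := mul_ne_zero (Complex.exp_ne_zero _) hζ0
    have habs : ‖A * ζ‖ = ‖ζ‖ := by rw [norm_mul, hA, one_mul]
    have habspos : 0 < ‖ζ‖ := norm_pos_iff.mpr hζ0
    have h2 : Real.cos (Real.pi / (2 * m)) < Real.cos (Complex.arg (A * ζ)) := by
      rw [Complex.cos_arg hξ0, habs, lt_div_iff₀ habspos]
      have := hζ
      simp only [Sec, mem_setOf_eq] at this
      linarith [this]
    have harg : |Complex.arg (A * ζ)| < Real.pi / (2 * m) := by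
      by_contra hcon
      push_neg at hcon
      have h3 : Real.cos (Complex.arg (A * ζ)) ≤ Real.cos (Real.pi / (2 * m)) := by
        rw [← Real.cos_abs]
        exact Real.strictAntiOn_cos.antitoneOn ⟨hβpos.le, hβle⟩
          ⟨(abs_nonneg _), (Complex.abs_arg_le_pi _)⟩ hcon
      linarith
    refine ⟨‖ζ‖, habspos, Complex.arg (A * ζ) + k * Real.pi / m, by
      rwa [add_sub_cancel_right], ?_⟩
    have h4 : (↑(‖ζ‖) : ℂ) * Complex.exp (↑(Complex.arg (A * ζ)) * Complex.I)
        = A * ζ := by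
      rw [← habs]
      exact Complex.norm_mul_exp_arg_mul_I (A * ζ)
    have h5 : Complex.exp (↑(k * Real.pi / m : ℝ) * Complex.I) * A = 1 := by
      rw [hA_def, ← Complex.exp_add, ← add_mul, ← Complex.ofReal_add]
      norm_num
    calc ζ = (Complex.exp (↑(k * Real.pi / m : ℝ) * Complex.I) * A) * ζ := by
            rw [h5, one_mul]
      _ = Complex.exp (↑(k * Real.pi / m : ℝ) * Complex.I) * (A * ζ) := by ring
      _ = Complex.exp (↑(k * Real.pi / m : ℝ) * Complex.I) *
            ((↑(‖ζ‖) : ℂ) * Complex.exp (↑(Complex.arg (A * ζ)) * Complex.I)) := by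
            rw [h4]
      _ = (↑(‖ζ‖) : ℂ) *
            Complex.exp (↑(Complex.arg (A * ζ) + k * Real.pi / m) * Complex.I) := by
            rw [Complex.ofReal_add, add_mul, Complex.exp_add]; ring
  · rintro ⟨r, hr, θ, hθ, rfl⟩
    have h1 : Complex.exp (↑(-(k * Real.pi / m)) * Complex.I) *
        ((r : ℂ) * Complex.exp (↑θ * Complex.I))
        = (r : ℂ) * Complex.exp (↑(θ - k * Real.pi / m) * Complex.I) := by
      rw [mul_comm (Complex.exp _) ((r:ℂ) * _), mul_assoc, ← Complex.exp_add, ← add_mul,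
        ← Complex.ofReal_add]
      ring_nf
    simp only [Sec, mem_setOf_eq, h1]
    rw [norm_mul, Complex.norm_real, Real.norm_eq_abs, Complex.norm_exp_ofReal_mul_I, mul_one, abs_of_pos hr,
      Complex.re_ofReal_mul, Complex.exp_ofReal_mul_I_re]
    apply mul_lt_mul_of_pos_left _ hr
    calc Real.cos (Real.pi / (2 * m)) < Real.cos |θ - k * Real.pi / m| := by
          apply Real.strictAntiOn_cos ⟨abs_nonneg _, lt_of_lt_of_le hθ hβle |>.le⟩
            ⟨hβpos.le, hβle⟩ hθ
      _ = Real.cos (θ - k * Real.pi / m) := Real.cos_abs _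

lemma Sec_isOpen : IsOpen (Sec m k) := by
  apply isOpen_lt
  · exact (continuous_norm).mul continuous_const
  · exact Complex.continuous_re.comp (continuous_const.mul continuous_id)

lemma Sec_convex (hm : 1 ≤ m) : Convex ℝ (Sec m k) := by
  intro x hx y hy a b ha hb hab
  simp only [Sec, mem_setOf_eq] at hx hy ⊢
  have hre : (Complex.exp (↑(-(k * Real.pi / m)) * Complex.I) * (a • x + b • y)).re
      = a * (Complex.exp (↑(-(k * Real.pi / m)) * Complex.I) * x).re
        + b * (Complex.exp (↑(-(k * Real.pi / m)) * Complex.I) * y).re := by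
    simp [mul_add, Complex.real_smul, Complex.re_ofReal_mul, mul_left_comm]
  have habs : ‖a • x + b • y‖ ≤ a * ‖x‖ + b * ‖y‖ := by
    calc ‖a • x + b • y‖ ≤ ‖a • x‖ + ‖b • y‖ :=
          norm_add_le _ _
      _ = a * ‖x‖ + b * ‖y‖ := by
          simp [Complex.real_smul, map_mul, Complex.norm_real, Real.norm_eq_abs, _root_.abs_of_nonneg ha,
            _root_.abs_of_nonneg hb]
  have hcos : (0:ℝ) ≤ Real.cos (Real.pi / (2 * m)) := by
    apply Real.cos_nonneg_of_mem_Icc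
    constructor
    · linarith [beta_pos hm, Real.pi_pos]
    · exact beta_le hm
  rw [hre]
  have hmain : a * (‖x‖ * Real.cos (Real.pi / (2 * m)))
      + b * (‖y‖ * Real.cos (Real.pi / (2 * m)))
      < a * (Complex.exp (↑(-(k * Real.pi / m)) * Complex.I) * x).re
        + b * (Complex.exp (↑(-(k * Real.pi / m)) * Complex.I) * y).re := by
    rcases eq_or_lt_of_le ha with h | h
    · have hb1 : b = 1 := by linarith
      rw [← h, hb1]; simpa using hy
    · have h1 := mul_lt_mul_of_pos_left hx h
      have h2 := mul_le_mul_of_nonneg_left hy.le hb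
      linarith
  calc ‖a • x + b • y‖ * Real.cos (Real.pi / (2 * m))
      ≤ (a * ‖x‖ + b * ‖y‖) * Real.cos (Real.pi / (2 * m)) :=
        mul_le_mul_of_nonneg_right habs hcos
    _ < _ := by linarith

lemma pow_eq {r : ℝ} (hr : 0 < r) (θ : ℝ) (m : ℕ) :
    ((r:ℂ) * Complex.exp (↑θ * Complex.I)) ^ m
      = (↑(r ^ m) : ℂ) * Complex.exp (↑(m * θ) * Complex.I) := by
  rw [mul_pow, ← Complex.exp_nat_mul]
  push_cast
  ring_nf

lemma Sec_re_pow_ne (hm : 1 ≤ m) {ζ : ℂ} (hζ : ζ ∈ Sec m k) : (ζ ^ m).re ≠ 0 := by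
  have hmR : (0:ℝ) < m := by exact_mod_cast hm
  obtain ⟨r, hr, θ, hθ, rfl⟩ := (mem_Sec_iff hm).1 hζ
  rw [pow_eq hr, Complex.re_ofReal_mul, Complex.exp_ofReal_mul_I_re]
  have hrm : 0 < r ^ m := pow_pos hr m
  have hα : |(m:ℝ) * θ - k * Real.pi| < Real.pi / 2 := by
    have h1 : |(m:ℝ) * θ - k * Real.pi| = m * |θ - k * Real.pi / m| := by
      rw [← _root_.abs_of_pos hmR, ← abs_mul]
      congr 1
      field_simp
      rw [_root_.abs_of_pos hmR]
      ring
    rw [h1]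
    calc (m:ℝ) * |θ - k * Real.pi / m| < m * (Real.pi / (2 * m)) :=
          mul_lt_mul_of_pos_left hθ hmR
      _ = Real.pi / 2 := by field_simp
  have hcosα : 0 < Real.cos ((m:ℝ) * θ - k * Real.pi) :=
    Real.cos_pos_of_mem_Ioo ⟨by linarith [(abs_lt.1 hα).1], (abs_lt.1 hα).2⟩
  have hsplit : Real.cos ((m:ℝ) * θ) = Real.cos (k * Real.pi)
      * Real.cos ((m:ℝ) * θ - k * Real.pi) := by
    have e : (m:ℝ) * θ = k * Real.pi + ((m:ℝ) * θ - k * Real.pi) := by ring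
    rw [e, Real.cos_add, Real.sin_nat_mul_pi]
    ring
  have hckπ : Real.cos ((k:ℝ) * Real.pi) ≠ 0 := by
    have h2 := Real.abs_cos_int_mul_pi (k : ℤ)
    push_cast at h2
    intro h
    rw [h] at h2
    simp at h2
  rw [hsplit]
  exact mul_ne_zero (ne_of_gt hrm) (mul_ne_zero hckπ (ne_of_gt hcosα))

lemma Sec_smul {ζ : ℂ} (hζ : ζ ∈ Sec m k) {t : ℝ} (ht : 0 < t) : (t:ℂ) * ζ ∈ Sec m k := by
  simp only [Sec, Set.mem_setOf_eq] at hζ ⊢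
  have h1 : Complex.exp (↑(-(k * Real.pi / m)) * Complex.I) * ((t:ℂ) * ζ)
      = (t:ℂ) * (Complex.exp (↑(-(k * Real.pi / m)) * Complex.I) * ζ) := by ring
  rw [h1, Complex.re_ofReal_mul, norm_mul, Complex.norm_real, Real.norm_eq_abs, _root_.abs_of_pos ht,
    mul_assoc]
  exact mul_lt_mul_of_pos_left hζ ht

lemma Sec_cover (hm : 1 ≤ m) {ζ : ℂ} (hζ : (ζ ^ m).re ≠ 0) :
    ∃ k : ℕ, k < 2 * m ∧ ζ ∈ Sec m k := by
  have hmR : (0:ℝ) < m := by exact_mod_cast hm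
  have hζ0 : ζ ≠ 0 := by
    rintro rfl
    rw [zero_pow (by omega)] at hζ
    simp at hζ
  have hr : 0 < ‖ζ‖ := norm_pos_iff.mpr hζ0
  have hζeq : ζ = ↑(‖ζ‖) * Complex.exp (↑(Complex.arg ζ) * Complex.I) :=
    (Complex.norm_mul_exp_arg_mul_I ζ).symm
  set r := ‖ζ‖
  set θ := Complex.arg ζ
  have hcos : Real.cos ((m:ℝ) * θ) ≠ 0 := by
    intro h
    apply hζ
    rw [hζeq, pow_eq hr, Complex.re_ofReal_mul, Complex.exp_ofReal_mul_I_re, h, mul_zero]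
  set x := (m:ℝ) * θ / Real.pi with hx_def
  set k' : ℤ := round x with hk'_def
  have hround : |x - k'| ≤ 1/2 := abs_sub_round x
  have hxpi : x * Real.pi = (m:ℝ) * θ := by
    rw [hx_def]; field_simp
  have hstrict : |(m:ℝ) * θ - k' * Real.pi| < Real.pi / 2 := by
    have h0 : (x - k') * Real.pi = (m:ℝ)*θ - k'*Real.pi := by rw [sub_mul, hxpi]
    have h1 : |(m:ℝ) * θ - k' * Real.pi| = |x - k'| * Real.pi := by
      rw [← h0, abs_mul, _root_.abs_of_pos Real.pi_pos]
    rcases lt_or_eq_of_le hround with hlt | heq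
    · rw [h1]
      calc |x - ↑k'| * Real.pi < (1/2) * Real.pi := mul_lt_mul_of_pos_right hlt Real.pi_pos
        _ = Real.pi / 2 := by ring
    · exfalso
      apply hcos
      rcases abs_eq (by norm_num : (0:ℝ) ≤ 1/2) |>.1 heq with he | he
      · have : (m:ℝ) * θ = k' * Real.pi + Real.pi/2 := by
          rw [← hxpi]
          have : x = k' + 1/2 := by linarith
          rw [this]; ring
        rw [this, Real.cos_add, Real.cos_pi_div_two, Real.sin_int_mul_pi, mul_zero, zero_mul,
          sub_zero]
      · have : (m:ℝ) * θ = k' * Real.pi - Real.pi/2 := by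
          rw [← hxpi]
          have : x = k' - 1/2 := by linarith
          rw [this]; ring
        rw [this, Real.cos_sub, Real.cos_pi_div_two, Real.sin_int_mul_pi, mul_zero, zero_mul,
          add_zero]
  have h2m : (0:ℤ) < 2*m := by positivity
  set k : ℕ := (k' % (2*(m:ℤ))).toNat with hk_def
  have hk' : (k : ℤ) = k' % (2*m) := Int.toNat_of_nonneg (Int.emod_nonneg _ (ne_of_gt h2m))
  have hklt : k < 2*m := by
    have h3 := Int.emod_lt_of_pos k' h2m
    omega
  refine ⟨k, hklt, ?_⟩
  rw [mem_Sec_iff hm]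
  set n : ℤ := k' / (2*(m:ℤ)) with hn_def
  have hkn : (k:ℤ) = k' - 2*m*n := by rw [hk', Int.emod_def]
  refine ⟨r, hr, θ - 2*Real.pi*n, ?_, ?_⟩
  · have harith : θ - 2*Real.pi*n - k*Real.pi/m = θ - k'*Real.pi/m := by
      have hknR : (k:ℝ) = (k':ℝ) - 2*m*n := by exact_mod_cast hkn
      rw [hknR]
      field_simp
      ring
    rw [harith]
    have habs : |θ - k'*Real.pi/m| = |(m:ℝ)*θ - k'*Real.pi| / m := by
      rw [← _root_.abs_of_pos hmR, ← abs_div]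
      congr 1
      field_simp
      rw [_root_.abs_of_pos hmR]
      ring
    rw [habs, div_lt_div_iff₀ hmR (by positivity)]
    nlinarith [hstrict, hmR]
  · rw [hζeq]
    congr 1
    have e : (↑(θ - 2*Real.pi*n) : ℂ) * Complex.I = ↑θ*Complex.I - ↑n * (2*Real.pi*Complex.I) := by
      push_cast
      ring
    rw [e, Complex.exp_sub, Complex.exp_int_mul_two_pi_mul_I, div_one]

lemma Sec_inj (hm : 1 ≤ m) {k j : ℕ} (hk : k < 2*m) (hj : j < 2*m) {ζ : ℂ}
    (h1 : ζ ∈ Sec m k) (h2 : ζ ∈ Sec m j) : k = j := by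
  have hmR : (0:ℝ) < m := by exact_mod_cast hm
  obtain ⟨r, hr, θ, hθ, hζ⟩ := (mem_Sec_iff hm).1 h1
  obtain ⟨r', hr', θ', hθ', hζ'⟩ := (mem_Sec_iff hm).1 h2
  have hrr : r = r' := by
    have h3 := congrArg (‖·‖) (hζ.symm.trans hζ')
    simpa [map_mul, Complex.norm_real, Real.norm_eq_abs, Complex.norm_exp_ofReal_mul_I,
      _root_.abs_of_pos hr, _root_.abs_of_pos hr'] using h3
  have hexp : Complex.exp (↑θ * Complex.I) = Complex.exp (↑θ' * Complex.I) := by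
    have h3 := hζ.symm.trans hζ'
    rw [hrr] at h3
    have hr'0 : (r' : ℂ) ≠ 0 := by exact_mod_cast ne_of_gt hr'
    exact mul_left_cancel₀ hr'0 h3
  obtain ⟨n, hn⟩ := Complex.exp_eq_exp_iff_exists_int.1 hexp
  have hθθ : θ = θ' + (n:ℝ) * (2*Real.pi) := by
    have h4 := congrArg Complex.im hn
    simpa using h4
  have key : |2*(m:ℝ)*(n:ℝ) + (j:ℝ) - (k:ℝ)| < 1 := by
    have e1 : 2*Real.pi*(n:ℝ) + ((j:ℝ) - k) * Real.pi/m
        = (θ - k*Real.pi/m) - (θ' - j*Real.pi/m) := by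
      rw [hθθ]
      field_simp
      ring
    have habs2 : |2*Real.pi*(n:ℝ) + ((j:ℝ) - k) * Real.pi / m| < Real.pi/m := by
      rw [e1]
      calc |(θ - k*Real.pi/m) - (θ' - j*Real.pi/m)|
          ≤ |θ - k*Real.pi/m| + |θ' - j*Real.pi/m| := abs_sub _ _
        _ < Real.pi/(2*m) + Real.pi/(2*m) := add_lt_add hθ hθ'
        _ = Real.pi/m := by field_simp; ring
    have e2 : (2*(m:ℝ)*(n:ℝ) + (j:ℝ) - k) = (2*Real.pi*(n:ℝ) + ((j:ℝ) - k)*Real.pi/m)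
        * (m/Real.pi) := by
      field_simp
      ring
    rw [e2, abs_mul, _root_.abs_of_pos (by positivity : (0:ℝ) < (m:ℝ)/Real.pi)]
    calc |2*Real.pi*(n:ℝ) + ((j:ℝ) - k)*Real.pi/m| * ((m:ℝ)/Real.pi)
        < (Real.pi/m) * ((m:ℝ)/Real.pi) := mul_lt_mul_of_pos_right habs2 (by positivity)
      _ = 1 := by field_simp
  have hint : 2*(m:ℤ)*n + (j:ℤ) - (k:ℤ) = 0 := by
    have h5 : |2*(m:ℤ)*n + (j:ℤ) - (k:ℤ)| < 1 := by
      have : |((2*(m:ℤ)*n + (j:ℤ) - (k:ℤ) : ℤ) : ℝ)| < 1 := by push_cast; exact key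
      exact_mod_cast this
    obtain ⟨hl, hr2⟩ := abs_lt.1 h5
    have h8 : 2*(m:ℤ)*n + (j:ℤ) - k ≤ 0 := Int.lt_add_one_iff.1 (by simpa using hr2)
    have h9 : (0:ℤ) ≤ 2*(m:ℤ)*n + (j:ℤ) - k := by
      have := Int.add_one_le_iff.2 hl
      linarith
    linarith
  have hn0 : n = 0 := by
    have h6 : 2*(m:ℤ)*n = (k:ℤ) - j := by linarith
    have h7 : |2*(m:ℤ)*n| < 2*(m:ℤ) := by
      rw [h6, abs_lt]
      constructor <;> omega
    rw [abs_mul, _root_.abs_of_pos (by positivity : (0:ℤ) < 2*(m:ℤ))] at h7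
    have hn1 : |n| < 1 := by
      by_contra hc
      push_neg at hc
      nlinarith [h7]
    obtain ⟨hl2, hr3⟩ := abs_lt.1 hn1
    omega
  rw [hn0] at hint
  simp at hint
  omega


lemma Sec_ne_zero {ζ : ℂ} (hζ : ζ ∈ Sec m k) : ζ ≠ 0 := by
  rintro rfl
  simp [Sec] at hζ


lemma hasDerivAt_normSq_comp {γ : ℝ → ℂ} {d : ℂ} {t : ℝ} (hγ : HasDerivAt γ d t) :
    HasDerivAt (fun s => Complex.normSq (γ s)) (2 * ((starRingEnd ℂ) (γ t) * d).re) t := by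
  have hre : HasDerivAt (fun s => (γ s).re) d.re t := by
    exact Complex.reCLM.hasFDerivAt.comp_hasDerivAt t hγ
  have him : HasDerivAt (fun s => (γ s).im) d.im t := by
    exact Complex.imCLM.hasFDerivAt.comp_hasDerivAt t hγ
  have h1 : HasDerivAt (fun s => (γ s).re * (γ s).re + (γ s).im * (γ s).im)
      (d.re * (γ t).re + (γ t).re * d.re + (d.im * (γ t).im + (γ t).im * d.im)) t :=
    (hre.mul hre).add (him.mul him)
  have h2 : (fun s => (γ s).re * (γ s).re + (γ s).im * (γ s).im)
      = fun s => Complex.normSq (γ s) := by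
    funext s; rw [Complex.normSq_apply]
  rw [h2] at h1
  convert h1 using 1
  simp only [Complex.mul_re, Complex.conj_re, Complex.conj_im]
  ring

end HZSaux

end

/-- Local structure of the zero set of a harmonic function: there is a conformal map ρ with
g∘ρ(ζ) = ζ^m, the zero set of H = Re g is the ρ-image of the m lines {Re ζ^m = 0}, and on a
small disk the complement of the zero set has exactly 2m connected components. -/
theorem harmonic_zero_set_structure (R : ℝ) (hR : 0 < R)
    (H : ℂ → ℝ) (g h : ℂ → ℂ) (m : ℕ) (hm : 1 ≤ m)
    (hH : HarmonicOn H (ball 0 R))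
    (hg : DifferentiableOn ℂ g (ball 0 R))
    (hRe : ∀ z ∈ ball 0 R, H z = (g z).re) (hH0 : H 0 = 0)
    -- g vanishes to order exactly m at the origin
    (hh : DifferentiableOn ℂ h (ball 0 R))
    (hfac : ∀ z ∈ ball 0 R, g z = z ^ m * h z) (hne : h 0 ≠ 0) :
    ∃ ε > 0, ∃ ρ : ℂ → ℂ,
      DifferentiableOn ℂ ρ (ball 0 ε) ∧ Set.InjOn ρ (ball 0 ε) ∧ ρ 0 = 0 ∧
      IsOpen (ρ '' ball 0 ε) ∧ ρ '' ball 0 ε ⊆ ball 0 R ∧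
      (∀ ζ ∈ ball 0 ε, g (ρ ζ) = ζ ^ m) ∧
      {z ∈ ρ '' ball 0 ε | H z = 0} = ρ '' {ζ ∈ ball 0 ε | (ζ ^ m).re = 0} ∧
      ∃ δ > 0, ball 0 δ ⊆ ρ '' ball 0 ε ∧
        Nat.card {C : Set ℂ // ∃ z ∈ ball 0 δ \ {w | H w = 0},
          C = connectedComponentIn (ball 0 δ \ {w | H w = 0}) z} = 2 * m := by
  classical
  have hmC : (m:ℂ) ≠ 0 := Nat.cast_ne_zero.2 (by omega)
  set c₀ : ℂ := Complex.exp (Complex.log (h 0) / m) with hc₀_def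
  have hc₀ : c₀ ≠ 0 := Complex.exp_ne_zero _
  have hc₀m : c₀ ^ m = h 0 := by
    rw [hc₀_def, ← Complex.exp_nat_mul, mul_div_cancel₀ _ hmC, Complex.exp_log hne]
  have h0mem : (0:ℂ) ∈ ball (0:ℂ) R := mem_ball_self hR
  have hh_cont : ContinuousAt h 0 :=
    hh.continuousOn.continuousAt (isOpen_ball.mem_nhds h0mem)
  have hpre : h ⁻¹' (ball (h 0) ‖h 0‖) ∈ nhds (0:ℂ) :=
    hh_cont (ball_mem_nhds _ (norm_pos_iff.2 hne))
  obtain ⟨r₀, hr₀pos, hr₀⟩ := Metric.mem_nhds_iff.1 hpre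
  set r₁ : ℝ := min r₀ R with hr₁_def
  have hr₁pos : 0 < r₁ := lt_min hr₀pos hR
  have hr₁R : ball (0:ℂ) r₁ ⊆ ball 0 R := ball_subset_ball (min_le_right _ _)
  have hr₁close : ∀ z ∈ ball (0:ℂ) r₁, ‖h z - h 0‖ < ‖h 0‖ := by
    intro z hz
    have h1 := hr₀ (ball_subset_ball (min_le_left _ _) hz)
    simpa [mem_ball, dist_eq_norm] using h1
  have hhz_ne : ∀ z ∈ ball (0:ℂ) r₁, h z ≠ 0 := by
    intro z hz h0
    have h1 := hr₁close z hz
    rw [h0] at h1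
    simp at h1
  have hslit : ∀ z ∈ ball (0:ℂ) r₁, h z / h 0 ∈ Complex.slitPlane := by
    intro z hz
    rw [Complex.mem_slitPlane_iff]
    left
    have h1 : ‖h z / h 0 - 1‖ < 1 := by
      rw [show h z / h 0 - 1 = (h z - h 0) / h 0 by field_simp, norm_div,
        div_lt_one (norm_pos_iff.2 hne)]
      exact hr₁close z hz
    have h2 : |(h z / h 0 - 1).re| ≤ ‖h z / h 0 - 1‖ := Complex.abs_re_le_norm _
    have h3 : (h z / h 0).re = 1 + (h z / h 0 - 1).re := by simp
    rw [h3]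
    have := abs_le.1 h2
    linarith [this.1]
  set u : ℂ → ℂ := fun z => c₀ * Complex.exp ((m:ℂ)⁻¹ * Complex.log (h z / h 0)) with hu_def
  have hu_ne : ∀ z, u z ≠ 0 := fun z => mul_ne_zero hc₀ (Complex.exp_ne_zero _)
  have hu0 : u 0 = c₀ := by
    rw [hu_def]
    simp [div_self hne, Complex.log_one]
  have hu_pow : ∀ z ∈ ball (0:ℂ) r₁, u z ^ m = h z := by
    intro z hz
    have hwne : h z / h 0 ≠ 0 := div_ne_zero (hhz_ne z hz) hne
    rw [hu_def]
    simp only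
    rw [mul_pow, hc₀m, ← Complex.exp_nat_mul, ← mul_assoc, mul_inv_cancel₀ hmC, one_mul,
      Complex.exp_log hwne, mul_comm, div_mul_cancel₀ _ hne]
  have hu_diff : DifferentiableOn ℂ u (ball 0 r₁) := by
    intro z hz
    have hdh : DifferentiableAt ℂ h z := hh.differentiableAt (isOpen_ball.mem_nhds (hr₁R hz))
    exact ((((hdh.div_const (h 0)).clog (hslit z hz)).const_mul
      ((m:ℂ)⁻¹)).cexp.const_mul c₀).differentiableWithinAt
  have hu_an : AnalyticOnNhd ℂ u (ball 0 r₁) := hu_diff.analyticOnNhd isOpen_ball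
  have hu'_cont : ContinuousOn (deriv u) (ball 0 r₁) := (hu_an.deriv).continuousOn
  have hu_cont : ContinuousOn u (ball 0 r₁) := hu_diff.continuousOn
  set φ : ℂ → ℂ := fun z => z * u z with hφ_def
  have hφ_diff : DifferentiableOn ℂ φ (ball 0 r₁) := differentiableOn_id.mul hu_diff
  have hφ_an : AnalyticOnNhd ℂ φ (ball 0 r₁) := hφ_diff.analyticOnNhd isOpen_ball
  have hφ_cont : ContinuousOn φ (ball 0 r₁) := hφ_diff.continuousOn
  have hφ_hasDeriv : ∀ z ∈ ball (0:ℂ) r₁, HasDerivAt φ (u z + z * deriv u z) z := by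
    intro z hz
    have hdu : DifferentiableAt ℂ u z := hu_diff.differentiableAt (isOpen_ball.mem_nhds hz)
    have h1 := (hasDerivAt_id' z).mul hdu.hasDerivAt
    rw [one_mul] at h1
    exact h1
  have hφ_strict : ∀ z ∈ ball (0:ℂ) r₁, HasStrictDerivAt φ (u z + z * deriv u z) z := by
    intro z hz
    have h1 : HasStrictDerivAt φ (deriv φ z) z :=
      ((hφ_an z hz).hasStrictFDerivAt).hasStrictDerivAt
    rwa [(hφ_hasDeriv z hz).deriv] at h1
  have hφ00 : φ 0 = 0 := by rw [hφ_def]; simp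
  have hφ0 : HasStrictDerivAt φ c₀ 0 := by
    have h1 := hφ_strict 0 (mem_ball_self hr₁pos)
    simpa [hu0] using h1
  set e := (hφ0.hasStrictFDerivAt_equiv hc₀).toOpenPartialHomeomorph φ with he_def
  have hecoe : (e : ℂ → ℂ) = φ := HasStrictFDerivAt.toOpenPartialHomeomorph_coe _
  have he0s : (0:ℂ) ∈ e.source := HasStrictFDerivAt.mem_toOpenPartialHomeomorph_source _
  have heq0 : e 0 = 0 := by rw [hecoe]; exact hφ00
  have he0t : (0:ℂ) ∈ e.target := by
    have h1 := e.map_source he0s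
    rwa [heq0] at h1
  -- choose r₂
  have hP : {z : ℂ | ‖z * deriv u z‖ < ‖u z‖ / 2} ∈ nhds (0:ℂ) := by
    have hc : ContinuousAt (fun z : ℂ => ‖u z‖ / 2 - ‖z * deriv u z‖) 0 := by
      have h1 : ContinuousAt u 0 := hu_cont.continuousAt (isOpen_ball.mem_nhds (mem_ball_self hr₁pos))
      have h2 : ContinuousAt (deriv u) 0 :=
        hu'_cont.continuousAt (isOpen_ball.mem_nhds (mem_ball_self hr₁pos))
      exact ((h1.norm.div_const 2).sub ((continuousAt_id.mul h2).norm))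
    have h00 : (0:ℝ) < ‖u 0‖/2 - ‖(0:ℂ) * deriv u 0‖ := by
      rw [hu0]
      simp only [zero_mul, norm_zero, sub_zero]
      have := norm_pos_iff.2 hc₀
      linarith
    have h3 := hc.preimage_mem_nhds (isOpen_Ioi.mem_nhds h00)
    have h4 : (fun z : ℂ => ‖u z‖ / 2 - ‖z * deriv u z‖) ⁻¹' Set.Ioi 0
        = {z : ℂ | ‖z * deriv u z‖ < ‖u z‖ / 2} := by
      ext z
      simp [Set.mem_preimage, Set.mem_Ioi, sub_pos]
    rwa [h4] at h3
  have hPall : (ball (0:ℂ) r₁ ∩ e.source ∩ {z : ℂ | ‖z * deriv u z‖ < ‖u z‖ / 2})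
      ∈ nhds (0:ℂ) :=
    Filter.inter_mem (Filter.inter_mem (isOpen_ball.mem_nhds (mem_ball_self hr₁pos))
      (e.open_source.mem_nhds he0s)) hP
  obtain ⟨r₂, hr₂pos, hr₂sub⟩ := Metric.mem_nhds_iff.1 hPall
  have hr₂ : ∀ z ∈ ball (0:ℂ) r₂,
      z ∈ ball (0:ℂ) r₁ ∧ z ∈ e.source ∧ ‖z * deriv u z‖ < ‖u z‖ / 2 := by
    intro z hz
    have h1 := hr₂sub hz
    exact ⟨h1.1.1, h1.1.2, h1.2⟩
  have hφ'_ne : ∀ z ∈ ball (0:ℂ) r₂, u z + z * deriv u z ≠ 0 := by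
    intro z hz hzero
    obtain ⟨hz1, hz2, hz3⟩ := hr₂ z hz
    have h1 : ‖u z‖ = ‖z * deriv u z‖ := by
      have h2 : u z = -(z * deriv u z) := by linear_combination hzero
      rw [h2, norm_neg]
    have h2 : 0 < ‖u z‖ := norm_pos_iff.2 (hu_ne z)
    linarith
  have hkey : ∀ z ∈ ball (0:ℂ) r₂,
      0 ≤ ((starRingEnd ℂ) z * φ z * (u z + z * deriv u z)⁻¹).re := by
    intro z hz
    obtain ⟨hz1, hz2, hz3⟩ := hr₂ z hz
    have hune := hu_ne z
    set w : ℂ := z * deriv u z / u z with hw_def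
    have hwnorm : ‖w‖ ≤ 1/2 := by
      rw [hw_def, norm_div, div_le_iff₀ (norm_pos_iff.2 hune)]
      nlinarith [norm_nonneg (u z), hz3]
    have h1w : (1:ℂ) + w ≠ 0 := by
      intro h0
      have h2 : w = -1 := by linear_combination h0
      rw [h2] at hwnorm
      rw [norm_neg, norm_one] at hwnorm
      linarith
    have hexpr : (starRingEnd ℂ) z * φ z * (u z + z * deriv u z)⁻¹
        = ((Complex.normSq z : ℝ) : ℂ) * (1 + w)⁻¹ := by
      have hcz : ((Complex.normSq z : ℝ):ℂ) = (starRingEnd ℂ) z * z := by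
        rw [Complex.normSq_eq_conj_mul_self]
      have hsum : u z + z * deriv u z = u z * (1 + w) := by
        rw [hw_def]
        field_simp
      rw [hφ_def]
      simp only
      rw [hsum, hcz, mul_inv]
      field_simp
    rw [hexpr, Complex.re_ofReal_mul]
    apply mul_nonneg (Complex.normSq_nonneg z)
    rw [Complex.inv_re]
    apply div_nonneg _ (Complex.normSq_nonneg _)
    have h2 : |w.re| ≤ ‖w‖ := Complex.abs_re_le_norm w
    have h3 := abs_le.1 h2
    simp only [Complex.add_re, Complex.one_re]
    linarith [h3.1]
  -- choose ε
  have hsymm0 : e.symm 0 = 0 := by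
    have h1 := e.left_inv he0s
    rwa [heq0] at h1
  have hsymm_cont : ContinuousAt e.symm 0 := e.continuousAt_symm he0t
  have hQ : (e.target ∩ e.symm ⁻¹' (ball 0 r₂)) ∈ nhds (0:ℂ) := by
    refine Filter.inter_mem (e.open_target.mem_nhds he0t) ?_
    apply hsymm_cont.preimage_mem_nhds
    apply isOpen_ball.mem_nhds
    rw [hsymm0]
    exact mem_ball_self hr₂pos
  obtain ⟨ε, hεpos, hεsub⟩ := Metric.mem_nhds_iff.1 hQ
  set ρ : ℂ → ℂ := (e.symm : ℂ → ℂ) with hρ_def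
  have hεt : ∀ ζ ∈ ball (0:ℂ) ε, ζ ∈ e.target := fun ζ hζ => (hεsub hζ).1
  have hρr₂ : ∀ ζ ∈ ball (0:ℂ) ε, ρ ζ ∈ ball 0 r₂ := fun ζ hζ => (hεsub hζ).2
  have hφρ : ∀ ζ ∈ ball (0:ℂ) ε, φ (ρ ζ) = ζ := by
    intro ζ hζ
    have h1 := e.right_inv (hεt ζ hζ)
    rwa [hecoe] at h1
  have hρ0 : ρ 0 = 0 := hsymm0
  -- differentiability of ρ
  have hρ_strict : ∀ ζ ∈ ball (0:ℂ) ε,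
      HasStrictDerivAt ρ (u (ρ ζ) + (ρ ζ) * deriv u (ρ ζ))⁻¹ ζ := by
    intro ζ hζ
    have hz2 : ρ ζ ∈ ball (0:ℂ) r₂ := hρr₂ ζ hζ
    obtain ⟨hz1, hzs, _⟩ := hr₂ _ hz2
    have hst := hφ_strict _ hz1
    have hev : ∀ᶠ w in nhds (ρ ζ), ρ (φ w) = w := by
      filter_upwards [e.eventually_left_inverse hzs] with w hw
      rw [hρ_def, ← hecoe]
      exact hw
    have h2 := hst.to_local_left_inverse (hφ'_ne _ hz2) hev
    rwa [hφρ ζ hζ] at h2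
  have hρ_diff : DifferentiableOn ℂ ρ (ball 0 ε) := fun ζ hζ =>
    ((hρ_strict ζ hζ).hasDerivAt.differentiableAt).differentiableWithinAt
  have hρ_cont : ContinuousOn ρ (ball 0 ε) := hρ_diff.continuousOn
  -- monotonicity along rays
  have hmono : ∀ ζ ∈ ball (0:ℂ) ε, ∀ t ∈ Set.Icc (0:ℝ) 1,
      ‖ρ ((t:ℂ) * ζ)‖ ≤ ‖ρ ζ‖ := by
    intro ζ hζ t ht
    have hmem : ∀ s : ℝ, s ∈ Set.Icc (0:ℝ) 1 → (s:ℂ) * ζ ∈ ball (0:ℂ) ε := by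
      intro s hs
      rw [mem_ball_zero_iff] at hζ ⊢
      calc ‖(s:ℂ) * ζ‖ = |s| * ‖ζ‖ := by rw [norm_mul, Complex.norm_real, Real.norm_eq_abs]
        _ ≤ 1 * ‖ζ‖ := by
            apply mul_le_mul_of_nonneg_right _ (norm_nonneg _)
            rw [_root_.abs_of_nonneg hs.1]
            exact hs.2
        _ < ε := by rwa [one_mul]
    set f : ℝ → ℝ := fun s => Complex.normSq (ρ ((s:ℂ) * ζ)) with hf_def
    have hd : ∀ s ∈ Set.Icc (0:ℝ) 1, HasDerivAt f
        (2 * (((starRingEnd ℂ) (ρ ((s:ℂ)*ζ)) *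
          (ζ * (u (ρ ((s:ℂ)*ζ)) + (ρ ((s:ℂ)*ζ)) * deriv u (ρ ((s:ℂ)*ζ)))⁻¹)).re)) s := by
      intro s hs
      have hγ : HasDerivAt (fun s : ℝ => (s:ℂ) * ζ) ζ s := by
        simpa using (Complex.ofRealCLM.hasDerivAt (x := s)).mul_const ζ
      have hρd := (hρ_strict _ (hmem s hs)).hasDerivAt
      have hcomp := hρd.scomp s hγ
      have h5 := HZSaux.hasDerivAt_normSq_comp hcomp
      convert h5 using 2
      all_goals rfl
    have hcont : ContinuousOn f (Set.Icc (0:ℝ) 1) := fun s hs =>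
      ((hd s hs).continuousAt).continuousWithinAt
    have hdiff : DifferentiableOn ℝ f (interior (Set.Icc (0:ℝ) 1)) := fun s hs =>
      ((hd s (interior_subset hs)).differentiableAt).differentiableWithinAt
    have hderiv_nonneg : ∀ s ∈ interior (Set.Icc (0:ℝ) 1), 0 ≤ deriv f s := by
      intro s hs
      rw [interior_Icc] at hs
      rw [(hd s (Set.mem_Icc_of_Ioo hs)).deriv]
      have hσ : (s:ℂ) * ζ ∈ ball (0:ℂ) ε := hmem s (Set.mem_Icc_of_Ioo hs)
      have hz2 : ρ ((s:ℂ)*ζ) ∈ ball (0:ℂ) r₂ := hρr₂ _ hσ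
      have hkey' := hkey _ hz2
      have hsne : (s:ℝ) ≠ 0 := ne_of_gt hs.1
      have hζσ : ζ = ((s⁻¹ : ℝ):ℂ) * ((s:ℂ) * ζ) := by
        push_cast
        rw [← mul_assoc, inv_mul_cancel₀ (by exact_mod_cast hsne), one_mul]
      have hφσ : φ (ρ ((s:ℂ)*ζ)) = (s:ℂ)*ζ := hφρ _ hσ
      have hrw : (starRingEnd ℂ) (ρ ((s:ℂ)*ζ)) *
            (ζ * (u (ρ ((s:ℂ)*ζ)) + (ρ ((s:ℂ)*ζ)) * deriv u (ρ ((s:ℂ)*ζ)))⁻¹)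
          = ((s⁻¹:ℝ):ℂ) * ((starRingEnd ℂ) (ρ ((s:ℂ)*ζ)) * φ (ρ ((s:ℂ)*ζ)) *
              (u (ρ ((s:ℂ)*ζ)) + (ρ ((s:ℂ)*ζ)) * deriv u (ρ ((s:ℂ)*ζ)))⁻¹) := by
        rw [hφσ]
        have hs' : (s:ℂ) ≠ 0 := by exact_mod_cast hsne
        have h9 : ((s⁻¹:ℝ):ℂ) * ((s:ℝ):ℂ) = 1 := by
          push_cast
          exact inv_mul_cancel₀ hs'
        generalize (u (ρ ((s:ℂ)*ζ)) + (ρ ((s:ℂ)*ζ)) * deriv u (ρ ((s:ℂ)*ζ)))⁻¹ = X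
        generalize (starRingEnd ℂ) (ρ ((s:ℂ)*ζ)) = C
        calc C * (ζ * X) = (((s⁻¹:ℝ):ℂ) * ((s:ℝ):ℂ)) * (C * (ζ * X)) := by
              rw [h9, one_mul]
          _ = _ := by ring
      rw [hrw, Complex.re_ofReal_mul]
      have : 0 ≤ s⁻¹ := inv_nonneg.2 hs.1.le
      positivity
    have hmon := monotoneOn_of_deriv_nonneg (convex_Icc 0 1) hcont hdiff hderiv_nonneg
    have h01 : f t ≤ f 1 := hmon ht ⟨zero_le_one, le_refl 1⟩ ht.2
    have h02 : Complex.normSq (ρ ((t:ℂ)*ζ)) ≤ Complex.normSq (ρ ζ) := by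
      have : f 1 = Complex.normSq (ρ ζ) := by rw [hf_def]; simp
      rw [← this]
      exact h01
    rw [Complex.norm_def, Complex.norm_def]
    exact Real.sqrt_le_sqrt h02
  -- injectivity
  have hρ_inj : Set.InjOn ρ (ball 0 ε) := by
    intro ζ₁ h1 ζ₂ h2 heq
    have := congrArg φ heq
    rwa [hφρ ζ₁ h1, hφρ ζ₂ h2] at this
  -- open image
  have himg_open : IsOpen (ρ '' ball 0 ε) := by
    apply e.symm.isOpen_image_of_subset_source isOpen_ball
    rw [OpenPartialHomeomorph.symm_source]
    intro ζ hζ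
    exact hεt ζ hζ
  have himg_r₂ : ρ '' ball 0 ε ⊆ ball 0 r₂ := by
    rintro z ⟨ζ, hζ, rfl⟩
    exact hρr₂ ζ hζ
  have hr₂r₁ : ball (0:ℂ) r₂ ⊆ ball 0 r₁ := fun z hz => (hr₂ z hz).1
  have himg_R : ρ '' ball 0 ε ⊆ ball 0 R := fun z hz => hr₁R (hr₂r₁ (himg_r₂ hz))
  -- g ∘ ρ = pow
  have hφpow : ∀ z ∈ ball (0:ℂ) r₁, g z = (φ z) ^ m := by
    intro z hz
    rw [hfac z (hr₁R hz), hφ_def]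
    simp only
    rw [mul_pow, hu_pow z hz]
  have hgρ : ∀ ζ ∈ ball (0:ℂ) ε, g (ρ ζ) = ζ ^ m := by
    intro ζ hζ
    rw [hφpow _ (hr₂r₁ (hρr₂ ζ hζ)), hφρ ζ hζ]
  -- zero set identity
  have hzero : {z ∈ ρ '' ball 0 ε | H z = 0} = ρ '' {ζ ∈ ball 0 ε | ((ζ:ℂ) ^ m).re = 0} := by
    ext z
    constructor
    · rintro ⟨⟨ζ, hζ, rfl⟩, hz0⟩
      refine ⟨ζ, ⟨hζ, ?_⟩, rfl⟩
      have h1 := hRe (ρ ζ) (himg_R ⟨ζ, hζ, rfl⟩)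
      rw [hgρ ζ hζ] at h1
      rw [← h1]
      exact hz0
    · rintro ⟨ζ, ⟨hζ, hζ0⟩, rfl⟩
      refine ⟨⟨ζ, hζ, rfl⟩, ?_⟩
      have h1 := hRe (ρ ζ) (himg_R ⟨ζ, hζ, rfl⟩)
      rw [hgρ ζ hζ] at h1
      rw [h1]
      exact hζ0
  -- choose δ
  have h0img : (0:ℂ) ∈ ρ '' ball 0 ε := ⟨0, mem_ball_self hεpos, hρ0⟩
  obtain ⟨δ, hδpos, hδsub⟩ := Metric.mem_nhds_iff.1 (himg_open.mem_nhds h0img)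
  refine ⟨ε, hεpos, ρ, hρ_diff, hρ_inj, hρ0, himg_open, himg_R, hgρ, hzero,
    δ, hδpos, hδsub, ?_⟩
  set Z : Set ℂ := {w | H w = 0} with hZ_def
  set B : Set ℂ := ball 0 δ \ Z with hB_def
  have hδr₂ : ball (0:ℂ) δ ⊆ ball 0 r₂ := fun z hz => himg_r₂ (hδsub hz)
  have hδr₁ : ball (0:ℂ) δ ⊆ ball 0 r₁ := fun z hz => hr₂r₁ (hδr₂ hz)
  have hδR : ball (0:ℂ) δ ⊆ ball 0 R := fun z hz => hr₁R (hδr₁ hz)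
  have hHφ : ∀ z ∈ ball (0:ℂ) δ, H z = ((φ z) ^ m).re := by
    intro z hz
    rw [hRe z (hδR hz), hφpow z (hδr₁ hz)]
  set W : Set ℂ := ball 0 ε ∩ ρ ⁻¹' (ball 0 δ) with hW_def
  have hW_open : IsOpen W := hρ_cont.isOpen_inter_preimage isOpen_ball isOpen_ball
  have hW0 : (0:ℂ) ∈ W := by
    refine ⟨mem_ball_self hεpos, ?_⟩
    rw [Set.mem_preimage, hρ0]
    exact mem_ball_self hδpos
  obtain ⟨r, hrpos, hrW⟩ := Metric.mem_nhds_iff.1 (hW_open.mem_nhds hW0)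
  have hWball : W ⊆ ball 0 ε := fun ζ hζ => hζ.1
  have hWstar : ∀ ζ ∈ W, ∀ t ∈ Set.Icc (0:ℝ) 1, (t:ℂ) * ζ ∈ W := by
    intro ζ hζ t ht
    have hb : (t:ℂ) * ζ ∈ ball (0:ℂ) ε := by
      rw [mem_ball_zero_iff]
      have h2 : ‖ζ‖ < ε := mem_ball_zero_iff.1 hζ.1
      calc ‖(t:ℂ) * ζ‖ = |t| * ‖ζ‖ := by
            rw [norm_mul, Complex.norm_real, Real.norm_eq_abs]
        _ ≤ 1 * ‖ζ‖ := by
            apply mul_le_mul_of_nonneg_right _ (norm_nonneg _)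
            rw [_root_.abs_of_nonneg ht.1]
            exact ht.2
        _ < ε := by rwa [one_mul]
    refine ⟨hb, ?_⟩
    rw [Set.mem_preimage, mem_ball_zero_iff]
    have h1 := hmono ζ hζ.1 t ht
    have h2 : ‖ρ ζ‖ < δ := mem_ball_zero_iff.1 hζ.2
    calc ‖ρ ((t:ℂ)*ζ)‖ = ‖ρ ((t:ℂ)*ζ)‖ := rfl
      _ ≤ ‖ρ ζ‖ := h1
      _ < δ := h2
  have hcorr : ∀ z ∈ ball (0:ℂ) δ, φ z ∈ W ∧ ρ (φ z) = z := by
    intro z hz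
    obtain ⟨ζ₀, hζ₀, rfl⟩ := hδsub hz
    rw [hφρ ζ₀ hζ₀]
    exact ⟨⟨hζ₀, hz⟩, rfl⟩
  set V : ℕ → Set ℂ := fun k => ball 0 δ ∩ φ ⁻¹' (HZSaux.Sec m k) with hV_def
  have hV_open : ∀ k, IsOpen (V k) := fun k =>
    (hφ_cont.mono hδr₁).isOpen_inter_preimage isOpen_ball HZSaux.Sec_isOpen
  have hV_img : ∀ k, V k = ρ '' (W ∩ HZSaux.Sec m k) := by
    intro k
    ext z
    constructor
    · rintro ⟨hz1, hz2⟩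
      obtain ⟨hφW, hρφz⟩ := hcorr z hz1
      exact ⟨φ z, ⟨hφW, hz2⟩, hρφz⟩
    · rintro ⟨ζ, ⟨hζW, hζS⟩, rfl⟩
      refine ⟨hζW.2, ?_⟩
      rw [Set.mem_preimage, hφρ ζ hζW.1]
      exact hζS
  set p : ℕ → ℂ := fun k => ((r/2:ℝ):ℂ) * Complex.exp (↑(k * Real.pi / m) * Complex.I)
    with hp_def
  have hp_ball : ∀ k : ℕ, p k ∈ ball (0:ℂ) r := by
    intro k
    rw [mem_ball_zero_iff, hp_def]
    simp only
    rw [norm_mul, Complex.norm_real, Real.norm_eq_abs, 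
      Complex.norm_exp_ofReal_mul_I, mul_one, _root_.abs_of_pos (by linarith : (0:ℝ) < r/2)]
    linarith
  have hp_sec : ∀ k : ℕ, p k ∈ HZSaux.Sec m k := by
    intro k
    rw [HZSaux.mem_Sec_iff hm]
    refine ⟨r/2, by linarith, k * Real.pi / m, ?_, rfl⟩
    simpa using HZSaux.beta_pos hm
  have hpU : ∀ k : ℕ, p k ∈ W ∩ HZSaux.Sec m k := fun k => ⟨hrW (hp_ball k), hp_sec k⟩
  have hU_conn : ∀ k : ℕ, IsConnected (W ∩ HZSaux.Sec m k) := by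
    intro k
    set core := ball (0:ℂ) r ∩ HZSaux.Sec m k with hcore_def
    have hcore_sub : core ⊆ W ∩ HZSaux.Sec m k := fun x hx => ⟨hrW hx.1, hx.2⟩
    have hcore_conv : Convex ℝ core := (convex_ball 0 r).inter (HZSaux.Sec_convex hm)
    have hpcore : p k ∈ core := ⟨hp_ball k, hp_sec k⟩
    set 𝒮 : Set (Set ℂ) := {S | ∃ x ∈ W ∩ HZSaux.Sec m k,
      S = segment ℝ x ((↑(min 1 (r/(2*‖x‖))) : ℂ) * x) ∪ core} with h𝒮_def
    have hseg_fact : ∀ x ∈ W ∩ HZSaux.Sec m k,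
        (↑(min 1 (r/(2*‖x‖))) : ℂ) * x ∈ core ∧
        segment ℝ x ((↑(min 1 (r/(2*‖x‖))) : ℂ) * x) ⊆ W ∩ HZSaux.Sec m k := by
      intro x hx
      have hx0 : x ≠ 0 := HZSaux.Sec_ne_zero hx.2
      have ha : 0 < ‖x‖ := norm_pos_iff.mpr hx0
      set t := min 1 (r/(2*‖x‖)) with ht_def
      have ht0 : 0 < t := lt_min one_pos (by positivity)
      have ht1 : t ≤ 1 := min_le_left _ _
      have htx_core : (↑t : ℂ) * x ∈ core := by
        constructor
        · rw [mem_ball_zero_iff, norm_mul, Complex.norm_real, Real.norm_eq_abs,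
            _root_.abs_of_pos ht0]
          have h1 : t ≤ r/(2*‖x‖) := min_le_right _ _
          have h2 : t * ‖x‖ ≤ (r/(2*‖x‖)) * ‖x‖ :=
            mul_le_mul_of_nonneg_right h1 ha.le
          have h3 : (r/(2*‖x‖)) * ‖x‖ = r/2 := by
            field_simp
          linarith
        · exact HZSaux.Sec_smul hx.2 ht0
      refine ⟨htx_core, ?_⟩
      intro y hy
      obtain ⟨a', b', ha', hb', hab', rfl⟩ := hy
      have hyc : a' • x + b' • ((↑t : ℂ) * x) = ((a' + b'*t : ℝ):ℂ) * x := by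
        push_cast
        rw [Complex.real_smul, Complex.real_smul]
        ring
      rw [hyc]
      have hc0 : 0 < a' + b'*t := by nlinarith
      have hc1 : a' + b'*t ≤ 1 := by nlinarith
      exact ⟨hWstar x hx.1 _ ⟨hc0.le, hc1⟩, HZSaux.Sec_smul hx.2 hc0⟩
    have hunion : ⋃₀ 𝒮 = W ∩ HZSaux.Sec m k := by
      apply Set.Subset.antisymm
      · rintro y ⟨S, ⟨x, hx, rfl⟩, hyS⟩
        rcases hyS with hyS | hyS
        · exact (hseg_fact x hx).2 hyS
        · exact hcore_sub hyS
      · intro x hx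
        refine ⟨segment ℝ x ((↑(min 1 (r/(2*‖x‖))) : ℂ) * x) ∪ core,
          ⟨x, hx, rfl⟩, Or.inl (left_mem_segment ℝ _ _)⟩
    refine ⟨⟨p k, hpU k⟩, ?_⟩
    rw [← hunion]
    apply isPreconnected_sUnion (p k)
    · rintro S ⟨x, hx, rfl⟩
      exact Or.inr hpcore
    · rintro S ⟨x, hx, rfl⟩
      apply IsPreconnected.union ((↑(min 1 (r/(2*‖x‖))) : ℂ) * x)
      · exact right_mem_segment ℝ _ _
      · exact (hseg_fact x hx).1
      · exact (convex_segment _ _).isPreconnected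
      · exact hcore_conv.isPreconnected
  have hV_conn : ∀ k : ℕ, IsConnected (V k) := by
    intro k
    rw [hV_img k]
    exact (hU_conn k).image ρ (hρ_cont.mono fun ζ hζ => hζ.1.1)
  have hV_sub_B : ∀ k : ℕ, V k ⊆ B := by
    intro k z hz
    refine ⟨hz.1, ?_⟩
    intro hzZ
    have h1 := hHφ z hz.1
    exact HZSaux.Sec_re_pow_ne hm hz.2 (by rw [← h1]; exact hzZ)
  have hB_sub : ∀ z ∈ B, ∃ k : ℕ, k < 2*m ∧ z ∈ V k := by
    intro z hz
    have h1 : ((φ z) ^ m).re ≠ 0 := by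
      rw [← hHφ z hz.1]
      exact hz.2
    obtain ⟨k, hk, hkS⟩ := HZSaux.Sec_cover hm h1
    exact ⟨k, hk, hz.1, hkS⟩
  have hV_disj : ∀ j k : ℕ, j < 2*m → k < 2*m → j ≠ k →
      ∀ z, z ∈ V j → z ∈ V k → False := by
    intro j k hj hk hjk z h1 h2
    exact hjk (HZSaux.Sec_inj hm hj hk h1.2 h2.2)
  have hcomp : ∀ z ∈ B, ∀ k : ℕ, k < 2*m → z ∈ V k →
      connectedComponentIn B z = V k := by
    intro z hz k hk hzk
    apply Set.Subset.antisymm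
    · have hpre := isPreconnected_connectedComponentIn (x := z) (F := B)
      have hsub : connectedComponentIn B z ⊆ V k ∪ ⋃ j ∈ Finset.range (2*m) \ {k}, V j := by
        intro y hy
        have hyB := connectedComponentIn_subset B z hy
        obtain ⟨j, hj, hjV⟩ := hB_sub y hyB
        by_cases hjk : j = k
        · left
          rwa [hjk] at hjV
        · right
          exact Set.mem_biUnion (Finset.mem_sdiff.2 ⟨Finset.mem_range.2 hj,
            by simp [hjk]⟩) hjV
      have hdisj : Disjoint (V k) (⋃ j ∈ Finset.range (2*m) \ {k}, V j) := by
        rw [Set.disjoint_left]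
        intro y hy1 hy2
        rw [Set.mem_iUnion₂] at hy2
        obtain ⟨j, hj, hjV⟩ := hy2
        rw [Finset.mem_sdiff, Finset.mem_range, Finset.mem_singleton] at hj
        exact hV_disj k j hk hj.1 (fun hkj => hj.2 hkj.symm) y hy1 hjV
      have hopen2 : IsOpen (⋃ j ∈ Finset.range (2*m) \ {k}, V j) :=
        isOpen_biUnion fun j _ => hV_open j
      exact hpre.subset_left_of_subset_union (hV_open k) hopen2 hdisj hsub
        ⟨z, mem_connectedComponentIn hz, hzk⟩
    · exact (hV_conn k).isPreconnected.subset_connectedComponentIn hzk (hV_sub_B k)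
  set F : Fin (2*m) → Set ℂ := fun k => V k with hF_def
  have hpV : ∀ k : ℕ, ρ (p k) ∈ V k := by
    intro k
    rw [hV_img]
    exact ⟨p k, hpU k, rfl⟩
  have hFinj : Function.Injective F := by
    intro j k hjk
    by_contra hne'
    have hpj : ρ (p (j:ℕ)) ∈ V j := hpV j
    have hpj' : ρ (p (j:ℕ)) ∈ V k := by
      have : V (j:ℕ) = V (k:ℕ) := hjk
      rwa [this] at hpj
    exact hV_disj j k j.2 k.2 (fun hh' => hne' (Fin.ext hh')) _ hpj hpj'
  have hset : {C : Set ℂ | ∃ z ∈ B, C = connectedComponentIn B z} = Set.range F := by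
    ext C
    constructor
    · rintro ⟨z, hz, rfl⟩
      obtain ⟨k, hk, hzk⟩ := hB_sub z hz
      exact ⟨⟨k, hk⟩, (hcomp z hz k hk hzk).symm⟩
    · rintro ⟨k, rfl⟩
      have hpk : ρ (p (k:ℕ)) ∈ V k := hpV k
      have hpkB : ρ (p (k:ℕ)) ∈ B := hV_sub_B k hpk
      exact ⟨ρ (p (k:ℕ)), hpkB, (hcomp _ hpkB k k.2 hpk).symm⟩
  have h1 : Nat.card {C : Set ℂ // ∃ z ∈ B, C = connectedComponentIn B z}
      = Nat.card (Set.range F) := Nat.card_congr (Equiv.setCongr hset)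
  rw [h1, Nat.card_range_of_injective hFinj]
  simp
end

section
/- Every subharmonic function V on an open set Ω ⊆ ℂ which is piecewise harmonic with respect to finitely many harmonic functions H₁, …, H_k (relative to the null set supp(ΔV)) is continuous on Ω. -/
open MeasureTheory Metric

section Auxiliary

open Set
open scoped Real

lemma ae_circle_misses (K : Set ℂ) (hKcl : IsClosed K) (hKnull : volume K = 0) (c : ℂ) :
    ∀ᵐ (r : ℝ) ∂(volume.restrict (Ioi (0:ℝ))), ∀ᵐ (θ : ℝ) ∂(volume.restrict (Ioo (-π) π)),
      c + (r:ℂ) * Complex.exp ((θ:ℂ) * Complex.I) ∉ K := by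
  set Kc : Set ℂ := (fun z => c + z) ⁻¹' K with hKc
  have hKcm : MeasurableSet Kc := (hKcl.preimage (by continuity)).measurableSet
  have hKcnull : volume Kc = 0 := by rw [hKc, measure_preimage_add]; exact hKnull
  set N : Set (ℝ × ℝ) := Complex.measurableEquivRealProd.symm ⁻¹' Kc with hN
  have hNm : MeasurableSet N := Complex.measurableEquivRealProd.symm.measurable hKcm
  have hNnull : volume N = 0 := by
    rw [hN, (Complex.volume_preserving_equiv_real_prod.symm).measure_preimage
      hKcm.nullMeasurableSet]
    exact hKcnull
  have hsymm : ⇑polarCoord.symm = fun p : ℝ × ℝ => (p.1 * Real.cos p.2, p.1 * Real.sin p.2) := by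
    funext p; simp
  have hinj : InjOn polarCoord.symm polarCoord.target := by
    have := polarCoord.symm.injOn; simpa using this
  have hder : ∀ p ∈ polarCoord.target, HasFDerivWithinAt polarCoord.symm
      (LinearMap.toContinuousLinearMap (Matrix.toLin (Module.Basis.finTwoProd ℝ) (Module.Basis.finTwoProd ℝ)
        !![Real.cos p.2, -p.1 * Real.sin p.2; Real.sin p.2, p.1 * Real.cos p.2]))
      polarCoord.target p :=
    fun p _ => (hasFDerivAt_polarCoord_symm p).hasFDerivWithinAt
  have hcv := lintegral_image_eq_lintegral_abs_det_fderiv_mul volume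
    polarCoord.open_target.measurableSet hder hinj (N.indicator 1)
  have hdet : ∀ p : ℝ × ℝ, (LinearMap.toContinuousLinearMap (Matrix.toLin (Module.Basis.finTwoProd ℝ)
      (Module.Basis.finTwoProd ℝ)
      !![Real.cos p.2, -p.1 * Real.sin p.2; Real.sin p.2, p.1 * Real.cos p.2])).det = p.1 := by
    intro p
    conv_rhs => rw [← one_mul p.1, ← Real.cos_sq_add_sin_sq p.2]
    simp only [neg_mul, LinearMap.det_toContinuousLinearMap, LinearMap.det_toLin,
      Matrix.det_fin_two_of, sub_neg_eq_add]
    ring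
  simp_rw [hdet] at hcv
  have hzero : (∫⁻ p in polarCoord.target,
      ENNReal.ofReal |p.1| * N.indicator 1 (polarCoord.symm p)) = 0 := by
    rw [← hcv]
    refine le_antisymm ?_ zero_le
    calc ∫⁻ x in polarCoord.symm '' polarCoord.target, N.indicator 1 x
        ≤ ∫⁻ x, N.indicator 1 x := setLIntegral_le_lintegral _ _
      _ = volume N := by exact lintegral_indicator_one hNm
      _ = 0 := hNnull
  have hmeas : Measurable fun p : ℝ × ℝ =>
      ENNReal.ofReal |p.1| * N.indicator 1 (polarCoord.symm p) := by
    apply Measurable.mul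
    · exact measurable_fst.abs.ennreal_ofReal
    · refine Measurable.indicator measurable_const hNm |>.comp ?_
      rw [hsymm]
      exact ((measurable_fst.mul (Real.measurable_cos.comp measurable_snd)).prodMk
        (measurable_fst.mul (Real.measurable_sin.comp measurable_snd)))
  have hae0 : ∀ᵐ p ∂(volume.restrict polarCoord.target),
      ENNReal.ofReal |p.1| * N.indicator 1 (polarCoord.symm p) = 0 :=
    (lintegral_eq_zero_iff hmeas).1 hzero
  have haeT : ∀ᵐ p ∂(volume.restrict polarCoord.target), p ∈ polarCoord.target :=
    ae_restrict_mem polarCoord.open_target.measurableSet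
  have hae : ∀ᵐ p ∂(volume.restrict polarCoord.target), polarCoord.symm p ∉ N := by
    filter_upwards [hae0, haeT] with p h0 hT
    intro hmem
    rw [indicator_of_mem hmem] at h0
    have hp1 : (0:ℝ) < p.1 := hT.1
    simp [abs_of_pos hp1, ENNReal.ofReal_eq_zero] at h0
    exact absurd h0 (by linarith)
  rw [show polarCoord.target = Ioi (0:ℝ) ×ˢ Ioo (-π) π from rfl] at hae
  rw [show (volume : Measure (ℝ × ℝ)) = (volume : Measure ℝ).prod volume from
    (Measure.volume_eq_prod ℝ ℝ)] at hae
  rw [← Measure.prod_restrict] at hae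
  have := Measure.ae_ae_of_ae_prod hae
  filter_upwards [this] with r hr
  filter_upwards [hr] with θ hθ
  intro hmem
  apply hθ
  show polarCoord.symm (r, θ) ∈ N
  rw [hsymm, hN]
  show Complex.measurableEquivRealProd.symm (r * Real.cos θ, r * Real.sin θ) ∈ Kc
  have : Complex.measurableEquivRealProd.symm (r * Real.cos θ, r * Real.sin θ)
      = (r:ℂ) * Complex.exp ((θ:ℂ) * Complex.I) := by
    rw [show (Complex.measurableEquivRealProd.symm (r * Real.cos θ, r * Real.sin θ) : ℂ)
      = Complex.equivRealProd.symm (r * Real.cos θ, r * Real.sin θ) from rfl]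
    rw [Complex.exp_mul_I]
    simp [Complex.equivRealProd_symm_apply]
    push_cast
    ring
  rw [this]
  exact hmem

lemma exists_good_radius (K : Set ℂ) (hKcl : IsClosed K) (hKnull : volume K = 0) (c : ℂ)
    (u v : ℝ) (hu : 0 < u) (huv : u < v) :
    ∃ r : ℝ, u < r ∧ r ≤ v ∧ ∀ᵐ (θ : ℝ) ∂volume, θ ∈ Ioc 0 (2*π) →
      c + (r:ℂ) * Complex.exp ((θ:ℂ) * Complex.I) ∉ K := by
  have h := ae_circle_misses K hKcl hKnull c
  -- the set of good radii is co-null in Ioi 0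
  set Q : ℝ → Prop := fun r => ∀ᵐ (θ : ℝ) ∂(volume.restrict (Ioo (-π) π)),
      c + (r:ℂ) * Complex.exp ((θ:ℂ) * Complex.I) ∉ K with hQ
  have hbad : volume ({r : ℝ | ¬ Q r} ∩ Ioi 0) = 0 := by
    have := ae_iff.1 h
    rwa [Measure.restrict_apply' measurableSet_Ioi] at this
  have hsub : ¬ (∀ r ∈ Ioc u v, ¬ Q r) := by
    intro hall
    have : Ioc u v ⊆ {r : ℝ | ¬ Q r} ∩ Ioi 0 := by
      intro r hr
      exact ⟨hall r hr, lt_trans hu hr.1⟩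
    have hle := measure_mono_null this hbad
    rw [Real.volume_Ioc] at hle
    simp [ENNReal.ofReal_eq_zero] at hle
    linarith
  push_neg at hsub
  obtain ⟨r, hr, hQr⟩ := hsub
  refine ⟨r, hr.1, hr.2, ?_⟩
  -- upgrade from Ioo (-π) π to Ioc 0 (2π) by periodicity
  set S : Set ℝ := {θ : ℝ | c + (r:ℂ) * Complex.exp ((θ:ℂ) * Complex.I) ∈ K} with hS
  have hSnull : volume (S ∩ Ioo (-π) π) = 0 := by
    have := ae_iff.1 hQr
    rw [Measure.restrict_apply' measurableSet_Ioo] at this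
    simpa [hS, not_not] using this
  have hper : ∀ θ : ℝ, θ ∈ S ↔ (θ - 2*π) ∈ S := by
    intro θ
    simp only [hS, mem_setOf_eq]
    have harg : ((θ:ℂ)) * Complex.I = ((θ - 2*π : ℝ):ℂ) * Complex.I + 2*π*Complex.I := by
      push_cast; ring
    rw [harg, Complex.exp_add, Complex.exp_two_pi_mul_I, mul_one]
  have h1 : volume (S ∩ Ioc 0 π) = 0 := by
    refine measure_mono_null ?_ (measure_union_null hSnull (measure_singleton π))
    rintro θ ⟨hθS, hθI⟩
    rcases eq_or_lt_of_le hθI.2 with heq | hlt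
    · right; simp [heq]
    · left; exact ⟨hθS, lt_trans (neg_lt_zero.mpr Real.pi_pos) hθI.1, hlt⟩
  have h2 : volume (S ∩ Ioc π (2*π)) = 0 := by
    refine measure_mono_null ?_ (by rw [measure_preimage_add_right]; exact hSnull :
      volume ((fun θ : ℝ => θ + -(2*π)) ⁻¹' (S ∩ Ioo (-π) π)) = 0)
    rintro θ ⟨hθS, hθI⟩
    have hπ := Real.pi_pos
    refine ⟨?_, ?_, ?_⟩
    · show θ + -(2*π) ∈ S
      rw [show θ + -(2*π) = θ - 2*π by ring, ← hper]; exact hθS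
    · show -π < θ + -(2*π); have := hθI.1; linarith
    · show θ + -(2*π) < π; have := hθI.2; linarith
  have : volume (S ∩ Ioc 0 (2*π)) = 0 := by
    refine measure_mono_null ?_ (measure_union_null h1 h2)
    rintro θ ⟨hθS, hθI⟩
    rcases le_or_gt θ π with hle | hlt
    · left; exact ⟨hθS, hθI.1, hle⟩
    · right; exact ⟨hθS, hlt, hθI.2⟩
  rw [ae_iff]
  refine measure_mono_null ?_ this
  intro θ hθ
  simp only [mem_setOf_eq, Classical.not_imp, not_not] at hθ
  exact ⟨hθ.2, hθ.1⟩

lemma circle_bound (Ω : Set ℂ) (hΩ : IsOpen Ω) (V : ℂ → ℝ)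
    (husc : UpperSemicontinuousOn V Ω)
    (hsub : ∀ z ∈ Ω, ∀ r > 0, closedBall z r ⊆ Ω →
      V z ≤ (1 / (2 * Real.pi)) * ∫ θ in (0:ℝ)..(2 * Real.pi),
        V (z + r * Complex.exp (θ * Complex.I)))
    (c : ℂ) (r : ℝ) (hr : 0 < r) (hcb : closedBall c r ⊆ Ω)
    (D : Set ℂ) (hD : IsOpen D) (A L B : ℝ) (hLB : L ≤ B)
    (hae1 : ∀ᵐ (θ:ℝ) ∂volume, θ ∈ Ioc 0 (2*π) →
      V (c + (r:ℂ)*Complex.exp ((θ:ℂ)*Complex.I)) ≤ B)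
    (hae2 : ∀ᵐ (θ:ℝ) ∂volume, θ ∈ Ioc 0 (2*π) →
      (c + (r:ℂ)*Complex.exp ((θ:ℂ)*Complex.I)) ∈ D →
      V (c + (r:ℂ)*Complex.exp ((θ:ℂ)*Complex.I)) ≤ L)
    (hae3 : ∀ᵐ (θ:ℝ) ∂volume, θ ∈ Ioc 0 (2*π) →
      A ≤ V (c + (r:ℂ)*Complex.exp ((θ:ℂ)*Complex.I))) :
    V c ≤ (1/(2*π)) * (B * (2*π) + (L - B) *
      (volume ({θ : ℝ | (c + (r:ℂ)*Complex.exp ((θ:ℂ)*Complex.I)) ∈ D} ∩ Ioc 0 (2*π))).toReal) := by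
  have hπ := Real.pi_pos
  set w : ℝ → ℂ := fun θ => c + (r:ℂ)*Complex.exp ((θ:ℂ)*Complex.I) with hw
  have hwcont : Continuous w := by
    apply continuous_const.add
    exact continuous_const.mul (Complex.continuous_exp.comp
      ((Complex.continuous_ofReal).mul continuous_const))
  have hwmem : ∀ θ, w θ ∈ Ω := by
    intro θ
    apply hcb
    simp only [hw, mem_closedBall, dist_eq_norm]
    rw [show c + (r:ℂ)*Complex.exp ((θ:ℂ)*Complex.I) - c = (r:ℂ)*Complex.exp ((θ:ℂ)*Complex.I)
      by ring]
    rw [norm_mul, Complex.norm_exp_ofReal_mul_I]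
    simp [abs_of_pos hr]
  set g : ℝ → ℝ := fun θ => V (w θ) with hg
  -- g is upper semicontinuous, hence measurable
  have hgusc : UpperSemicontinuous g := by
    intro θ y hy
    have h1 := husc (w θ) (hwmem θ) y hy
    rw [nhdsWithin_eq_nhds.2 (hΩ.mem_nhds (hwmem θ))] at h1
    exact (hwcont.continuousAt).eventually h1
  have hgmeas : Measurable g := hgusc.measurable
  set T : Set ℝ := {θ : ℝ | w θ ∈ D} with hT
  have hTmeas : MeasurableSet T := (hD.preimage hwcont).measurableSet
  set φ : ℝ → ℝ := fun θ => B + T.indicator (fun _ => L - B) θ with hφ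
  have hφmeas : Measurable φ :=
    measurable_const.add (Measurable.indicator measurable_const hTmeas)
  -- interval integrability of g and φ
  have h2π : (0:ℝ) ≤ 2*π := by linarith
  have hIoc : Set.uIoc (0:ℝ) (2*π) = Ioc 0 (2*π) := uIoc_of_le h2π
  have hfin : volume (Ioc (0:ℝ) (2*π)) < ⊤ := by
    rw [Real.volume_Ioc]; exact ENNReal.ofReal_lt_top
  have hgint : IntervalIntegrable g volume 0 (2*π) := by
    rw [intervalIntegrable_iff, hIoc]
    have hbound : ∀ᵐ θ ∂(volume.restrict (Ioc (0:ℝ) (2*π))), ‖g θ‖ ≤ max |A| |B| := by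
      rw [ae_restrict_iff' measurableSet_Ioc]
      filter_upwards [hae1, hae3] with θ h1 h3 hmem
      rw [Real.norm_eq_abs, abs_le]
      constructor
      · calc -(max |A| |B|) ≤ -(|A|) := by simp
          _ ≤ A := neg_abs_le A
          _ ≤ g θ := h3 hmem
      · calc g θ ≤ B := h1 hmem
          _ ≤ |B| := le_abs_self B
          _ ≤ max |A| |B| := le_max_right _ _
    exact Integrable.mono' (integrableOn_const hfin.ne)
      hgmeas.aestronglyMeasurable hbound
  have hφint : IntervalIntegrable φ volume 0 (2*π) := by
    rw [intervalIntegrable_iff, hIoc]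
    apply Integrable.add (integrableOn_const hfin.ne)
    apply Integrable.mono' (g := fun _ => |L - B|) (integrableOn_const hfin.ne)
      (Measurable.indicator measurable_const hTmeas).aestronglyMeasurable
    apply Filter.Eventually.of_forall
    intro θ
    rw [Real.norm_eq_abs]
    by_cases hθ : θ ∈ T <;> simp [indicator_of_mem, indicator_of_notMem, hθ, abs_nonneg]
  -- compare the integrals
  have hgφ : ∫ θ in (0:ℝ)..(2*π), g θ ≤ ∫ θ in (0:ℝ)..(2*π), φ θ := by
    apply intervalIntegral.integral_mono_ae_restrict h2π hgint hφint
    have h0 : ∀ᵐ (θ:ℝ) ∂volume, θ ≠ (0:ℝ) := by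
      rw [ae_iff]
      convert Real.volume_singleton (a := (0:ℝ)) using 2
      ext θ; simp
    filter_upwards [ae_restrict_mem measurableSet_Icc, ae_restrict_of_ae hae1,
      ae_restrict_of_ae hae2, ae_restrict_of_ae h0] with θ hmem h1 h2 hne
    have hmem' : θ ∈ Ioc 0 (2*π) := ⟨lt_of_le_of_ne hmem.1 (Ne.symm hne), hmem.2⟩
    by_cases hθ : θ ∈ T
    · simp only [hφ, indicator_of_mem hθ]
      have := h2 hmem' hθ
      show g θ ≤ B + (L - B)
      simpa using this
    · simp only [hφ, indicator_of_notMem hθ, add_zero]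
      exact h1 hmem'
  -- compute the integral of φ
  have hφval : ∫ θ in (0:ℝ)..(2*π), φ θ
      = B * (2*π) + (L - B) * (volume (T ∩ Ioc 0 (2*π))).toReal := by
    rw [intervalIntegral.integral_of_le h2π]
    rw [hφ]
    rw [integral_add (integrableOn_const (C := B) hfin.ne)]
    · congr 1
      · rw [setIntegral_const, smul_eq_mul, measureReal_def, Real.volume_Ioc, sub_zero,
          ENNReal.toReal_ofReal h2π]
        ring
      · rw [setIntegral_indicator hTmeas]
        rw [setIntegral_const, smul_eq_mul, measureReal_def]
        rw [show Ioc (0:ℝ) (2*π) ∩ T = T ∩ Ioc (0:ℝ) (2*π) from inter_comm _ _]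
        ring
    · apply Integrable.mono' (g := fun _ => |L - B|) (integrableOn_const hfin.ne)
        (Measurable.indicator measurable_const hTmeas).aestronglyMeasurable
      apply Filter.Eventually.of_forall
      intro θ
      rw [Real.norm_eq_abs]
      by_cases hθ : θ ∈ T <;> simp [indicator_of_mem, indicator_of_notMem, hθ, abs_nonneg]
  -- conclude
  have hmono := hsub c (hcb (mem_closedBall_self hr.le)) r hr hcb
  calc V c ≤ (1/(2*π)) * ∫ θ in (0:ℝ)..(2*π), g θ := hmono
    _ ≤ (1/(2*π)) * ∫ θ in (0:ℝ)..(2*π), φ θ := by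
        apply mul_le_mul_of_nonneg_left hgφ
        positivity
    _ = (1/(2*π)) * (B * (2*π) + (L - B) * (volume (T ∩ Ioc 0 (2*π))).toReal) := by
        rw [hφval]

lemma arc_measure (x q : ℂ) (d r : ℝ) (hd : dist x q = d) (hd0 : 0 < d)
    (hr0 : 0 < r) (hrd : r ≤ d) :
    π/3 ≤ (volume ({θ : ℝ | (q + (r:ℂ)*Complex.exp ((θ:ℂ)*Complex.I)) ∈ ball x d}
      ∩ Ioc 0 (2*π))).toReal := by
  have hπ := Real.pi_pos
  set β := (x - q).arg with hβ
  have hβ1 : -π < β := Complex.neg_pi_lt_arg _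
  have hβ2 : β ≤ π := Complex.arg_le_pi _
  have habs : ‖x - q‖ = d := by rw [← hd, Complex.dist_eq]
  have hxq : x - q = (d:ℂ) * Complex.exp ((β:ℂ)*Complex.I) := by
    rw [← habs]
    exact (Complex.norm_mul_exp_arg_mul_I (x - q)).symm
  have key : ∀ θ : ℝ, 1/2 < Real.cos (θ - β) →
      (q + (r:ℂ)*Complex.exp ((θ:ℂ)*Complex.I)) ∈ ball x d := by
    intro θ hcos
    rw [mem_ball, dist_eq_norm]
    have hz : q + (r:ℂ)*Complex.exp ((θ:ℂ)*Complex.I) - x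
        = ((r * Real.cos θ - d * Real.cos β : ℝ):ℂ)
          + ((r * Real.sin θ - d * Real.sin β : ℝ):ℂ) * Complex.I := by
      have : q + (r:ℂ)*Complex.exp ((θ:ℂ)*Complex.I) - x
          = (r:ℂ)*Complex.exp ((θ:ℂ)*Complex.I) - (x - q) := by ring
      rw [this, hxq, Complex.exp_mul_I, Complex.exp_mul_I]
      rw [← Complex.ofReal_cos, ← Complex.ofReal_sin, ← Complex.ofReal_cos, ← Complex.ofReal_sin]
      push_cast
      ring
    have hnormsq : ‖q + (r:ℂ)*Complex.exp ((θ:ℂ)*Complex.I) - x‖^2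
        = (r * Real.cos θ - d * Real.cos β)^2 + (r * Real.sin θ - d * Real.sin β)^2 := by
      rw [hz, Complex.sq_norm, Complex.normSq_add_mul_I]
    have hlt : ‖q + (r:ℂ)*Complex.exp ((θ:ℂ)*Complex.I) - x‖^2 < d^2 := by
      rw [hnormsq]
      have hcs : Real.cos θ * Real.cos β + Real.sin θ * Real.sin β = Real.cos (θ - β) :=
        (Real.cos_sub θ β).symm
      have h1 : Real.sin θ^2 + Real.cos θ^2 = 1 := Real.sin_sq_add_cos_sq θ
      have h2 : Real.sin β^2 + Real.cos β^2 = 1 := Real.sin_sq_add_cos_sq β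
      have hexp : (r * Real.cos θ - d * Real.cos β)^2 + (r * Real.sin θ - d * Real.sin β)^2
          = r^2 + d^2 - 2*r*d*Real.cos (θ - β) := by
        linear_combination r^2 * h1 + d^2 * h2 - 2*r*d*hcs
      rw [hexp]
      have hrr : r*r ≤ r*d := mul_le_mul_of_nonneg_left hrd hr0.le
      nlinarith [mul_pos hr0 hd0]
    nlinarith [norm_nonneg (q + (r:ℂ)*Complex.exp ((θ:ℂ)*Complex.I) - x), hlt, hd0]
  -- choose a subinterval of length π/3
  set s : ℝ := if 0 < β then β else β + 5*π/3 with hs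
  have hsub : Ioo s (s + π/3) ⊆
      {θ : ℝ | (q + (r:ℂ)*Complex.exp ((θ:ℂ)*Complex.I)) ∈ ball x d} ∩ Ioc 0 (2*π) := by
    intro θ hθ
    by_cases hβ0 : 0 < β
    · rw [hs, if_pos hβ0] at hθ
      constructor
      · apply key
        have h1 : 0 ≤ θ - β := by have := hθ.1; linarith
        have h2 : θ - β < π/3 := by have := hθ.2; linarith
        calc (1:ℝ)/2 = Real.cos (π/3) := Real.cos_pi_div_three.symm
          _ < Real.cos (θ - β) := by
            rcases eq_or_lt_of_le h1 with heq | hlt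
            · rw [← heq, Real.cos_zero, Real.cos_pi_div_three]; norm_num
            · exact Real.cos_lt_cos_of_nonneg_of_le_pi h1 (by linarith) h2
      · exact ⟨by have := hθ.1; linarith, by have := hθ.2; linarith⟩
    · rw [hs, if_neg hβ0] at hθ
      push_neg at hβ0
      constructor
      · apply key
        have h1 : 5*π/3 < θ - β := by have := hθ.1; linarith
        have h2 : θ - β < 2*π := by have := hθ.2; linarith
        have : Real.cos (θ - β) = Real.cos (2*π - (θ - β)) := by
          rw [Real.cos_two_pi_sub]
        rw [this]
        calc (1:ℝ)/2 = Real.cos (π/3) := Real.cos_pi_div_three.symm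
          _ < Real.cos (2*π - (θ - β)) := by
            apply Real.cos_lt_cos_of_nonneg_of_le_pi (by linarith) (by linarith) (by linarith)
      · exact ⟨by have := hθ.1; linarith, by have := hθ.2; linarith⟩
  have hmeas : π/3 = (volume (Ioo s (s + π/3))).toReal := by
    rw [Real.volume_Ioo]
    rw [show s + π/3 - s = π/3 by ring]
    rw [ENNReal.toReal_ofReal (by positivity)]
  rw [hmeas]
  apply ENNReal.toReal_mono
  · apply ne_of_lt
    apply lt_of_le_of_lt (measure_mono inter_subset_right)
    rw [Real.volume_Ioc]
    exact ENNReal.ofReal_lt_top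
  · exact measure_mono hsub

lemma dist_circle_pt (c : ℂ) (r θ : ℝ) (hr : 0 ≤ r) :
    dist (c + (r:ℂ)*Complex.exp ((θ:ℂ)*Complex.I)) c = r := by
  rw [dist_eq_norm, show c + (r:ℂ)*Complex.exp ((θ:ℂ)*Complex.I) - c
    = (r:ℂ)*Complex.exp ((θ:ℂ)*Complex.I) by ring]
  rw [norm_mul, Complex.norm_exp_ofReal_mul_I]
  simp [abs_of_nonneg hr]


end Auxiliary

section MainTheorem

open Set
open scoped Real

set_option maxHeartbeats 1600000 in
/-- Theorem 2.7: every piecewise harmonic subharmonic function is continuous. -/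
theorem piecewise_harmonic_continuous (Ω K : Set ℂ) (hΩ : IsOpen Ω)
    (V : ℂ → ℝ) (hV : SubharmonicOn V Ω)
    (k : ℕ) (H : Fin k → ℂ → ℝ) (hH : ∀ i, HarmonicOn (H i) Ω)
    (hKcl : IsClosed K) (hKnull : volume K = 0)
    (hKsupp : ∀ z ∈ Ω, (z ∈ K ↔ ¬ ∃ ε > 0, ball z ε ⊆ Ω ∧ HarmonicOn V (ball z ε)))
    (hpw : ∀ z ∈ Ω \ K, ∃ j, ∀ w ∈ connectedComponentIn (Ω \ K) z, V w = H j w) :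
    ContinuousOn V Ω := by
  classical
  obtain ⟨husc, hsub⟩ := hV
  have hπ := Real.pi_pos
  -- continuity of each H i on Ω
  have hHca : ∀ i, ∀ z ∈ Ω, ContinuousAt (H i) z := by
    intro i z hz
    obtain ⟨η, hη, g, hg, heq⟩ := hH i z hz
    have hU : ball z η ∩ Ω ∈ nhds z :=
      Filter.inter_mem (isOpen_ball.mem_nhds (mem_ball_self hη)) (hΩ.mem_nhds hz)
    have hgc : ContinuousAt (fun w => (g w).re) z := by
      apply Complex.continuous_re.continuousAt.comp
      exact (hg.continuousOn.continuousAt (isOpen_ball.mem_nhds (mem_ball_self hη)))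
    apply hgc.congr
    apply Filter.eventuallyEq_of_mem hU
    intro w hw
    exact (heq w hw).symm
  have hHcOn : ∀ i, ContinuousOn (H i) Ω := fun i z hz => (hHca i z hz).continuousWithinAt
  -- pointwise labels
  have hlabel : ∀ z, z ∈ Ω → z ∉ K → ∃ i, V z = H i z := by
    intro z hzΩ hzK
    obtain ⟨j, hj⟩ := hpw z ⟨hzΩ, hzK⟩
    exact ⟨j, hj z (mem_connectedComponentIn ⟨hzΩ, hzK⟩)⟩
  intro z₀ hz₀
  obtain ⟨t₁, ht₁pos, ht₁⟩ := Metric.isOpen_iff.1 hΩ z₀ hz₀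
  set δ₁ := t₁/2 with hδ₁def
  have hδ₁pos : 0 < δ₁ := by positivity
  have hδ₁ : closedBall z₀ δ₁ ⊆ Ω := by
    refine subset_trans ?_ ht₁
    intro w hw
    rw [mem_closedBall] at hw
    rw [mem_ball]
    linarith
  -- non-K points in every ball
  have nonK : ∀ ρ, 0 < ρ → ∃ w, w ∈ ball z₀ ρ ∧ w ∈ Ω ∧ w ∉ K := by
    intro ρ hρ
    set ρ' := min ρ δ₁ with hρ'
    have hρ'pos : 0 < ρ' := lt_min hρ hδ₁pos
    by_contra hcon
    push_neg at hcon
    have hsubK : ball z₀ ρ' ⊆ K := by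
      intro w hw
      have hwρ : w ∈ ball z₀ ρ := ball_subset_ball (min_le_left _ _) hw
      have hwΩ : w ∈ Ω := hδ₁ (ball_subset_closedBall (ball_subset_ball (min_le_right _ _) hw))
      exact hcon w hwρ hwΩ
    have := measure_mono_null hsubK hKnull
    have hpos := measure_ball_pos volume z₀ hρ'pos
    rw [this] at hpos
    exact lt_irrefl _ hpos
  -- Fin k is nonempty
  obtain ⟨w₀, hw₀b, hw₀Ω, hw₀K⟩ := nonK δ₁ hδ₁pos
  obtain ⟨i₀, -⟩ := hlabel w₀ hw₀Ω hw₀K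
  have hkne : Nonempty (Fin k) := ⟨i₀⟩
  have huniv_ne : (Finset.univ : Finset (Fin k)).Nonempty := Finset.univ_nonempty
  -- accumulating labels
  set Acc : Fin k → Prop := fun i => ∀ ρ, 0 < ρ →
    ∃ z, z ∈ Ω ∧ z ∉ K ∧ V z = H i z ∧ dist z z₀ < ρ with hAcc
  -- stabilization radius
  have hnacc : ∀ i, ¬ Acc i → ∃ ρ, 0 < ρ ∧ ∀ z, z ∈ Ω → z ∉ K → V z = H i z →
      ρ ≤ dist z z₀ := by
    intro i hi
    simp only [hAcc, not_forall, not_exists, not_and, not_lt] at hi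
    obtain ⟨ρ, hρpos, hρ⟩ := hi
    exact ⟨ρ, hρpos, fun z h1 h2 h3 => hρ z h1 h2 h3⟩
  set f : Fin k → ℝ := fun i => if h : Acc i then δ₁ else (hnacc i h).choose with hf
  have hfpos : ∀ i, 0 < f i := by
    intro i
    simp only [hf]
    by_cases h : Acc i
    · rw [dif_pos h]; exact hδ₁pos
    · rw [dif_neg h]; exact (hnacc i h).choose_spec.1
  have hfprop : ∀ i, ¬ Acc i → ∀ z, z ∈ Ω → z ∉ K → V z = H i z → f i ≤ dist z z₀ := by
    intro i h z h1 h2 h3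
    simp only [hf]
    rw [dif_neg h]
    exact (hnacc i h).choose_spec.2 z h1 h2 h3
  set δ₂ : ℝ := min δ₁ (Finset.univ.inf' huniv_ne f) with hδ₂def
  have hδ₂pos : 0 < δ₂ := lt_min hδ₁pos (by
    rw [Finset.lt_inf'_iff]
    exact fun i _ => hfpos i)
  have hδ₂le : δ₂ ≤ δ₁ := min_le_left _ _
  -- within distance δ₂ of z₀, all labels are accumulating
  have hstab : ∀ z, z ∈ Ω → z ∉ K → dist z z₀ < δ₂ → ∃ i, Acc i ∧ V z = H i z := by
    intro z h1 h2 h3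
    obtain ⟨i, hi⟩ := hlabel z h1 h2
    refine ⟨i, ?_, hi⟩
    by_contra hcon
    have := hfprop i hcon z h1 h2 hi
    have hle : δ₂ ≤ f i := le_trans (min_le_right _ _) (Finset.inf'_le f (Finset.mem_univ i))
    linarith
  -- accumulating labels have boundary value at most V z₀
  have claim1 : ∀ i, Acc i → H i z₀ ≤ V z₀ := by
    intro i hi
    by_contra hcon
    push_neg at hcon
    set y := (V z₀ + H i z₀)/2 with hy
    have hy1 : V z₀ < y := by rw [hy]; linarith
    have hy2 : y < H i z₀ := by rw [hy]; linarith
    have h1 := husc z₀ hz₀ y hy1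
    rw [nhdsWithin_eq_nhds.2 (hΩ.mem_nhds hz₀)] at h1
    rw [Metric.eventually_nhds_iff] at h1
    obtain ⟨d1, hd1pos, hd1⟩ := h1
    have h2 := (hHca i z₀ hz₀).eventually (eventually_gt_nhds hy2)
    rw [Metric.eventually_nhds_iff] at h2
    obtain ⟨d2, hd2pos, hd2⟩ := h2
    obtain ⟨z, hzΩ, hzK, hzV, hzd⟩ := hi (min d1 d2) (lt_min hd1pos hd2pos)
    have hVz : V z < y := hd1 (lt_of_lt_of_le hzd (min_le_left _ _))
    have hHz : y < H i z := hd2 (lt_of_lt_of_le hzd (min_le_right _ _))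
    rw [hzV] at hVz
    linarith
  -- the gap constant a
  set tS : Finset (Fin k) := Finset.univ.filter (fun i => Acc i ∧ H i z₀ < V z₀) with htS
  set a : ℝ := if h : tS.Nonempty then (V z₀ - tS.sup' h (fun i => H i z₀))/2 else 1 with ha
  have hapos : 0 < a := by
    rw [ha]
    by_cases h : tS.Nonempty
    · rw [dif_pos h]
      have : tS.sup' h (fun i => H i z₀) < V z₀ := by
        rw [Finset.sup'_lt_iff]
        intro i hi
        rw [htS, Finset.mem_filter] at hi
        exact hi.2.2
      linarith
    · rw [dif_neg h]; norm_num
  have hdich : ∀ i, Acc i → H i z₀ < V z₀ → H i z₀ ≤ V z₀ - 2*a := by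
    intro i h1 h2
    have hmem : i ∈ tS := by rw [htS, Finset.mem_filter]; exact ⟨Finset.mem_univ i, h1, h2⟩
    have hne : tS.Nonempty := ⟨i, hmem⟩
    rw [ha, dif_pos hne]
    have := Finset.le_sup' (fun i => H i z₀) hmem
    linarith
  -- uniform bound on the H i over closedBall z₀ δ₁
  have hCex : ∀ i, ∃ C, ∀ w ∈ closedBall z₀ δ₁, |H i w| ≤ C := by
    intro i
    obtain ⟨C, hC⟩ := (isCompact_closedBall z₀ δ₁).exists_bound_of_continuousOn
      ((hHcOn i).mono hδ₁)
    exact ⟨C, fun w hw => hC w hw⟩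
  set CB : ℝ := Finset.univ.sup' huniv_ne (fun i => (hCex i).choose) with hCB
  have hCBprop : ∀ i, ∀ w ∈ closedBall z₀ δ₁, |H i w| ≤ CB := by
    intro i w hw
    exact le_trans ((hCex i).choose_spec w hw)
      (Finset.le_sup' (fun i => (hCex i).choose) (Finset.mem_univ i))
  -- now prove continuity within at z₀
  rw [Metric.continuousWithinAt_iff]
  intro ε₀ hε₀
  set ε : ℝ := min ε₀ a / 10 with hε
  have hεmin : 0 < min ε₀ a := lt_min hε₀ hapos
  have hεpos : 0 < ε := by rw [hε]; linarith
  have hεa : ε ≤ a/10 := by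
    rw [hε]; have := min_le_right ε₀ a; linarith
  have hεε₀ : ε < ε₀ := by
    rw [hε]; have := min_le_left ε₀ a; linarith
  -- the usc upper bound radius
  have h2 := husc z₀ hz₀ (V z₀ + ε) (by linarith)
  rw [nhdsWithin_eq_nhds.2 (hΩ.mem_nhds hz₀), Metric.eventually_nhds_iff] at h2
  obtain ⟨d2, hd2pos, hd2⟩ := h2
  -- continuity radii for the H i
  have h3 : ∀ i : Fin k, ∃ d, 0 < d ∧ ∀ z, dist z z₀ < d → |H i z - H i z₀| < ε/2 := by
    intro i
    obtain ⟨d, hd, hdp⟩ := Metric.continuousAt_iff.1 (hHca i z₀ hz₀) (ε/2) (by linarith)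
    exact ⟨d, hd, fun z hz => by have := hdp hz; rwa [Real.dist_eq] at this⟩
  choose d3 hd3pos hd3 using h3
  set δ : ℝ := min (min δ₂ d2) (Finset.univ.inf' huniv_ne d3) with hδ
  have hδpos : 0 < δ := lt_min (lt_min hδ₂pos hd2pos)
    (by rw [Finset.lt_inf'_iff]; exact fun i _ => hd3pos i)
  have hδδ₂ : δ ≤ δ₂ := le_trans (min_le_left _ _) (min_le_left _ _)
  have hδδ₁ : δ ≤ δ₁ := le_trans hδδ₂ hδ₂le
  have hδd2 : δ ≤ d2 := le_trans (min_le_left _ _) (min_le_right _ _)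
  have hδd3 : ∀ i, δ ≤ d3 i := fun i =>
    le_trans (min_le_right _ _) (Finset.inf'_le d3 (Finset.mem_univ i))
  -- upper bound within δ of z₀
  have hupper : ∀ z, dist z z₀ < δ → V z < V z₀ + ε :=
    fun z hz => hd2 (lt_of_lt_of_le hz hδd2)
  have hHclose : ∀ i, ∀ z, dist z z₀ < δ → |H i z - H i z₀| < ε/2 :=
    fun i z hz => hd3 i z (lt_of_lt_of_le hz (hδd3 i))
  -- deep bound at non-K points
  have hdeep : ∀ z, z ∈ Ω → z ∉ K → dist z z₀ < δ → V z < V z₀ - ε →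
      V z ≤ V z₀ - 2*a + ε/2 := by
    intro z h1 h2 h3 h4
    obtain ⟨i, hacc, hiz⟩ := hstab z h1 h2 (lt_of_lt_of_le h3 hδδ₂)
    have hcl := hHclose i z h3
    rw [abs_lt] at hcl
    have hHlt : H i z₀ < V z₀ := by rw [hiz] at h4; linarith
    have := hdich i hacc hHlt
    rw [hiz]
    linarith
  -- lower bound at non-K points
  have hlow : ∀ z, z ∈ Ω → z ∉ K → dist z z₀ < δ → -CB ≤ V z := by
    intro z h1 h2 h3
    obtain ⟨i, hi⟩ := hlabel z h1 h2
    have hzB : z ∈ closedBall z₀ δ₁ := by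
      rw [mem_closedBall]; linarith
    have := hCBprop i z hzB
    rw [hi, ← abs_neg] at *
    have habs := hCBprop i z hzB
    rw [abs_le] at habs
    rw [hi]
    linarith [habs.1]
  -- the open sublevel set
  set Λ : Set ℂ := (ball z₀ (δ/2) ∩ Ω) ∩ {z | V z < V z₀ - ε} with hΛ
  have hΛopen : IsOpen Λ := by
    rw [isOpen_iff_mem_nhds]
    intro z hz
    have h1 := husc z hz.1.2 (V z₀ - ε) hz.2
    rw [nhdsWithin_eq_nhds.2 (hΩ.mem_nhds hz.1.2)] at h1
    rw [hΛ]
    exact Filter.inter_mem (Filter.inter_mem (isOpen_ball.mem_nhds hz.1.1)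
      (hΩ.mem_nhds hz.1.2)) h1
  have hΛΩ : Λ ⊆ Ω := fun z hz => hz.1.2
  have hΛball : Λ ⊆ ball z₀ (δ/2) := fun z hz => hz.1.1
  have hΛlt : ∀ z ∈ Λ, V z < V z₀ - ε := fun z hz => hz.2
  -- all points of Λ are deep
  have hΛdeep : ∀ z ∈ Λ, V z ≤ V z₀ - 2*a + ε/2 := by
    intro z hz
    have hzΩ : z ∈ Ω := hΛΩ hz
    have hzb : dist z z₀ < δ/2 := mem_ball.1 (hΛball hz)
    by_cases hzK : z ∈ K
    · -- use the sub-mean value inequality on a small circle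
      have h1 := husc z hzΩ (V z₀ - ε) (hΛlt z hz)
      rw [nhdsWithin_eq_nhds.2 (hΩ.mem_nhds hzΩ), Metric.eventually_nhds_iff] at h1
      obtain ⟨ρ₀, hρ₀pos, hρ₀⟩ := h1
      set ρ : ℝ := min ρ₀ (δ/2 - dist z z₀) / 2 with hρ
      have hρpos : 0 < ρ := by
        rw [hρ]
        have : 0 < min ρ₀ (δ/2 - dist z z₀) := lt_min hρ₀pos (by linarith)
        linarith
      have hρρ₀ : ρ < ρ₀ := by
        rw [hρ]
        have h1 := min_le_left ρ₀ (δ/2 - dist z z₀)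
        linarith
      have hρδ : ρ + dist z z₀ < δ/2 := by
        rw [hρ]
        have h1 := min_le_right ρ₀ (δ/2 - dist z z₀)
        have := dist_nonneg (x := z) (y := z₀)
        linarith
      obtain ⟨r, hr1, hr2, hgood⟩ := exists_good_radius K hKcl hKnull z (ρ/2) ρ
        (by positivity) (by linarith)
      have hrpos : 0 < r := lt_trans (by positivity) hr1
      have hcb : closedBall z r ⊆ Ω := by
        intro w hw
        apply hδ₁
        rw [mem_closedBall] at *
        calc dist w z₀ ≤ dist w z + dist z z₀ := dist_triangle _ _ _
          _ ≤ r + dist z z₀ := by linarith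
          _ ≤ δ₁ := by linarith
      have hae1 : ∀ᵐ (θ:ℝ) ∂volume, θ ∈ Ioc 0 (2*π) →
          V (z + (r:ℂ)*Complex.exp ((θ:ℂ)*Complex.I)) ≤ V z₀ - 2*a + ε/2 := by
        filter_upwards [hgood] with θ hθ hIoc
        set w := z + (r:ℂ)*Complex.exp ((θ:ℂ)*Complex.I) with hw
        have hdw : dist w z = r := dist_circle_pt z r θ hrpos.le
        have hwΩ : w ∈ Ω := hcb (by rw [mem_closedBall, hdw])
        have hwz₀ : dist w z₀ < δ/2 := by
          calc dist w z₀ ≤ dist w z + dist z z₀ := dist_triangle _ _ _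
            _ = r + dist z z₀ := by rw [hdw]
            _ < δ/2 := by linarith
        have hwK : w ∉ K := hθ hIoc
        have hwlt : V w < V z₀ - ε := hρ₀ (by rw [hdw]; linarith)
        exact hdeep w hwΩ hwK (by linarith) hwlt
      have hae2 : ∀ᵐ (θ:ℝ) ∂volume, θ ∈ Ioc 0 (2*π) →
          (z + (r:ℂ)*Complex.exp ((θ:ℂ)*Complex.I)) ∈ (∅ : Set ℂ) →
          V (z + (r:ℂ)*Complex.exp ((θ:ℂ)*Complex.I)) ≤ V z₀ - 2*a + ε/2 := by
        filter_upwards with θ _ hmem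
        exact absurd hmem (notMem_empty _)
      have hae3 : ∀ᵐ (θ:ℝ) ∂volume, θ ∈ Ioc 0 (2*π) →
          -CB ≤ V (z + (r:ℂ)*Complex.exp ((θ:ℂ)*Complex.I)) := by
        filter_upwards [hgood] with θ hθ hIoc
        set w := z + (r:ℂ)*Complex.exp ((θ:ℂ)*Complex.I) with hw
        have hdw : dist w z = r := dist_circle_pt z r θ hrpos.le
        have hwΩ : w ∈ Ω := hcb (by rw [mem_closedBall, hdw])
        have hwz₀ : dist w z₀ < δ/2 := by
          calc dist w z₀ ≤ dist w z + dist z z₀ := dist_triangle _ _ _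
            _ = r + dist z z₀ := by rw [hdw]
            _ < δ/2 := by linarith
        exact hlow w hwΩ (hθ hIoc) (by linarith)
      have hkey := circle_bound Ω hΩ V husc hsub z r hrpos hcb ∅ isOpen_empty
        (-CB) (V z₀ - 2*a + ε/2) (V z₀ - 2*a + ε/2) le_rfl hae1 hae2 hae3
      have heq : (1/(2*π)) * ((V z₀ - 2*a + ε/2) * (2*π) + ((V z₀ - 2*a + ε/2)
          - (V z₀ - 2*a + ε/2)) * (volume ({θ : ℝ | (z + (r:ℂ)*Complex.exp ((θ:ℂ)*Complex.I))
          ∈ (∅ : Set ℂ)} ∩ Ioc 0 (2*π))).toReal) = V z₀ - 2*a + ε/2 := by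
        rw [sub_self, zero_mul, add_zero]
        field_simp
      rw [heq] at hkey
      exact hkey
    · exact hdeep z hzΩ hzK (by linarith) (hΛlt z hz)
  -- Λ is empty near z₀
  have hlower : ∀ x, x ∈ Ω → dist x z₀ < δ/16 → V z₀ - ε ≤ V x := by
    intro x hxΩ hxd
    by_contra hcon
    push_neg at hcon
    have hxΛ : x ∈ Λ := ⟨⟨mem_ball.2 (by linarith), hxΩ⟩, hcon⟩
    have hz₀notΛ : z₀ ∉ Λ := by
      intro hmem
      have := hΛlt z₀ hmem
      linarith
    have hΛcne : Λᶜ.Nonempty := ⟨z₀, hz₀notΛ⟩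
    set d := infDist x Λᶜ with hdd
    obtain ⟨t, htpos, htsub⟩ := Metric.isOpen_iff.1 hΛopen x hxΛ
    have hdpos : 0 < d := by
      by_contra hc
      push_neg at hc
      have hlt : d < t := lt_of_le_of_lt hc htpos
      rw [hdd, infDist_lt_iff hΛcne] at hlt
      obtain ⟨y, hyc, hylt⟩ := hlt
      exact hyc (htsub (mem_ball'.2 hylt))
    have hdle : d < δ/16 := lt_of_le_of_lt (infDist_le_dist_of_mem hz₀notΛ) hxd
    obtain ⟨q, hqΛc, hqd⟩ := (isClosed_compl_iff.2 hΛopen).exists_infDist_eq_dist hΛcne x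
    have hdq : dist x q = d := hqd.symm
    have hballΛ : ball x d ⊆ Λ := by
      rw [hdd]
      exact ball_infDist_compl_subset
    have hqz₀ : dist q z₀ < δ/8 := by
      calc dist q z₀ ≤ dist q x + dist x z₀ := dist_triangle _ _ _
        _ = d + dist x z₀ := by rw [dist_comm q x, hdq]
        _ < δ/16 + δ/16 := by linarith
        _ = δ/8 := by ring
    have hqΩ : q ∈ Ω := hδ₁ (mem_closedBall.2 (by linarith))
    have hqV : V z₀ - ε ≤ V q := by
      by_contra hc
      push_neg at hc
      exact hqΛc ⟨⟨mem_ball.2 (by linarith), hqΩ⟩, hc⟩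
    obtain ⟨r, hr1, hr2, hgood⟩ := exists_good_radius K hKcl hKnull q (d/2) d
      (by positivity) (by linarith)
    have hrpos : 0 < r := lt_trans (by positivity) hr1
    have hcb : closedBall q r ⊆ Ω := by
      intro w hw
      apply hδ₁
      rw [mem_closedBall] at *
      calc dist w z₀ ≤ dist w q + dist q z₀ := dist_triangle _ _ _
        _ ≤ r + δ/8 := by linarith
        _ ≤ δ₁ := by linarith
    have hae1 : ∀ᵐ (θ:ℝ) ∂volume, θ ∈ Ioc 0 (2*π) →
        V (q + (r:ℂ)*Complex.exp ((θ:ℂ)*Complex.I)) ≤ V z₀ + ε := by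
      filter_upwards with θ hIoc
      set w := q + (r:ℂ)*Complex.exp ((θ:ℂ)*Complex.I) with hw
      have hdw : dist w q = r := dist_circle_pt q r θ hrpos.le
      have hwz₀ : dist w z₀ < δ := by
        calc dist w z₀ ≤ dist w q + dist q z₀ := dist_triangle _ _ _
          _ < r + δ/8 := by linarith
          _ < δ := by linarith
      exact (hupper w hwz₀).le
    have hae2 : ∀ᵐ (θ:ℝ) ∂volume, θ ∈ Ioc 0 (2*π) →
        (q + (r:ℂ)*Complex.exp ((θ:ℂ)*Complex.I)) ∈ ball x d →
        V (q + (r:ℂ)*Complex.exp ((θ:ℂ)*Complex.I)) ≤ V z₀ - 2*a + ε/2 := by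
      filter_upwards [hgood] with θ hθ hIoc hmem
      set w := q + (r:ℂ)*Complex.exp ((θ:ℂ)*Complex.I) with hw
      have hwΛ : w ∈ Λ := hballΛ hmem
      have hdw : dist w q = r := dist_circle_pt q r θ hrpos.le
      have hwz₀ : dist w z₀ < δ := by
        calc dist w z₀ ≤ dist w q + dist q z₀ := dist_triangle _ _ _
          _ < r + δ/8 := by linarith
          _ < δ := by linarith
      exact hdeep w (hΛΩ hwΛ) (hθ hIoc) hwz₀ (hΛlt w hwΛ)
    have hae3 : ∀ᵐ (θ:ℝ) ∂volume, θ ∈ Ioc 0 (2*π) →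
        -CB ≤ V (q + (r:ℂ)*Complex.exp ((θ:ℂ)*Complex.I)) := by
      filter_upwards [hgood] with θ hθ hIoc
      set w := q + (r:ℂ)*Complex.exp ((θ:ℂ)*Complex.I) with hw
      have hdw : dist w q = r := dist_circle_pt q r θ hrpos.le
      have hwΩ : w ∈ Ω := hcb (by rw [mem_closedBall, hdw])
      have hwz₀ : dist w z₀ < δ := by
        calc dist w z₀ ≤ dist w q + dist q z₀ := dist_triangle _ _ _
          _ < r + δ/8 := by linarith
          _ < δ := by linarith
      exact hlow w hwΩ (hθ hIoc) hwz₀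
    have hkey := circle_bound Ω hΩ V husc hsub q r hrpos hcb (ball x d) isOpen_ball
      (-CB) (V z₀ - 2*a + ε/2) (V z₀ + ε) (by linarith) hae1 hae2 hae3
    set m := (volume ({θ : ℝ | (q + (r:ℂ)*Complex.exp ((θ:ℂ)*Complex.I)) ∈ ball x d}
      ∩ Ioc 0 (2*π))).toReal with hm
    have harc : π/3 ≤ m := arc_measure x q d r hdq hdpos hrpos hr2
    have hL : (V z₀ - 2*a + ε/2) - (V z₀ + ε) = -(2*a) - ε/2 := by ring
    have hterm : ((V z₀ - 2*a + ε/2) - (V z₀ + ε)) * m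
        ≤ ((V z₀ - 2*a + ε/2) - (V z₀ + ε)) * (π/3) := by
      rw [hL]
      apply mul_le_mul_of_nonpos_left harc
      linarith
    have hfin : V q ≤ (1/(2*π)) * ((V z₀ + ε) * (2*π)
        + ((V z₀ - 2*a + ε/2) - (V z₀ + ε)) * (π/3)) := by
      apply le_trans hkey
      apply mul_le_mul_of_nonneg_left _ (by positivity)
      exact add_le_add le_rfl hterm
    have heval : (1/(2*π)) * ((V z₀ + ε) * (2*π)
        + ((V z₀ - 2*a + ε/2) - (V z₀ + ε)) * (π/3)) = V z₀ + ε + (-(2*a) - ε/2)/6 := by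
      rw [hL]
      field_simp
      ring
    rw [heval] at hfin
    linarith
  refine ⟨δ/16, by positivity, ?_⟩
  intro z hzΩ hzd
  rw [Real.dist_eq, abs_lt]
  constructor
  · have := hlower z hzΩ hzd
    linarith
  · have h1 : dist z z₀ < δ := by linarith
    have := hupper z h1
    linarith

end MainTheorem
end

section
/- Let μ be the probability measure on the interval [−4, 0] ⊆ ℝ ⊆ ℂ with density dμ(x) = (1/2π)·√(4+x)/√(−x) dx. Then ∫_{−4}^{0} dμ = 1, and its Cauchy transform μ̂(z) = ∫_{−4}^0 dμ(x)/(z − x) satisfies the algebraic equation μ̂(z)² + μ̂(z) = 1/z for all z ∈ ℂ \ [−4,0]. -/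
open MeasureTheory intervalIntegral

noncomputable section
namespace CTEx
open Set

lemma image_Ioo : (fun θ : ℝ => 2 * Real.cos θ - 2) '' Ioo 0 Real.pi = Ioo (-4 : ℝ) 0 := by
  ext x
  constructor
  · rintro ⟨θ, ⟨h0, h1⟩, rfl⟩
    have hlt : Real.cos θ < 1 := by
      have := Real.strictAntiOn_cos (left_mem_Icc.2 Real.pi_pos.le) ⟨h0.le, h1.le⟩ h0
      simpa using this
    have hgt : -1 < Real.cos θ := by
      have := Real.strictAntiOn_cos ⟨h0.le, h1.le⟩ (right_mem_Icc.2 Real.pi_pos.le) h1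
      simpa using this
    constructor <;> simp only [] <;> nlinarith
  · rintro ⟨h1, h2⟩
    refine ⟨Real.arccos ((x + 2) / 2), ⟨?_, ?_⟩, ?_⟩
    · exact Real.arccos_pos.2 (by linarith)
    · refine lt_of_le_of_ne (Real.arccos_le_pi _) fun h => ?_
      rw [Real.arccos_eq_pi] at h; linarith
    · show 2 * Real.cos (Real.arccos ((x+2)/2)) - 2 = x
      rw [Real.cos_arccos (by linarith) (by linarith)]; ring

lemma injOn_f : InjOn (fun θ : ℝ => 2 * Real.cos θ - 2) (Ioo 0 Real.pi) := by
  intro a ha b hb hab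
  have h : Real.cos a = Real.cos b := by dsimp at hab; linarith
  exact Real.strictAntiOn_cos.injOn ⟨ha.1.le, ha.2.le⟩ ⟨hb.1.le, hb.2.le⟩ h

lemma cov {E : Type*} [NormedAddCommGroup E] [NormedSpace ℝ E] (g : ℝ → E) :
    ∫ x in Ioo (-4 : ℝ) 0, g x
      = ∫ θ in Ioo 0 Real.pi, |(-2) * Real.sin θ| • g (2 * Real.cos θ - 2) := by
  rw [← image_Ioo]
  exact integral_image_eq_integral_abs_deriv_smul measurableSet_Ioo
    (fun θ _ => by
      simpa [mul_comm, mul_neg, neg_mul] using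
        (((Real.hasDerivAt_cos θ).const_mul (2:ℝ)).sub_const 2).hasDerivWithinAt)
    injOn_f g
lemma density_cov {θ : ℝ} (h0 : 0 < θ) (h1 : θ < Real.pi) :
    |(-2) * Real.sin θ| *
        (1 / (2 * Real.pi) * Real.sqrt (4 + (2 * Real.cos θ - 2)) /
          Real.sqrt (-(2 * Real.cos θ - 2)))
      = Real.pi⁻¹ * (1 + Real.cos θ) := by
  have hs : 0 < Real.sin θ := Real.sin_pos_of_pos_of_lt_pi h0 h1
  have hpyth := Real.sin_sq_add_cos_sq θ
  have hcle : Real.cos θ ≤ 1 := Real.cos_le_one θ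
  have hcge : -1 ≤ Real.cos θ := Real.neg_one_le_cos θ
  have hc1 : Real.cos θ < 1 := by nlinarith
  have e1 : 4 + (2 * Real.cos θ - 2) = 2 + 2 * Real.cos θ := by ring
  have e2 : -(2 * Real.cos θ - 2) = 2 - 2 * Real.cos θ := by ring
  rw [e1, e2]
  have hb2 : (0:ℝ) < 2 - 2 * Real.cos θ := by linarith
  have hbne : Real.sqrt (2 - 2 * Real.cos θ) ≠ 0 := by positivity
  have hprod : Real.sqrt (2 + 2 * Real.cos θ) * Real.sqrt (2 - 2 * Real.cos θ)
      = 2 * Real.sin θ := by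
    rw [← Real.sqrt_mul (by linarith)]
    rw [show (2 + 2 * Real.cos θ) * (2 - 2 * Real.cos θ) = (2 * Real.sin θ)^2 by nlinarith]
    exact Real.sqrt_sq (by positivity)
  have ha : Real.sqrt (2 + 2 * Real.cos θ)
      = 2 * Real.sin θ / Real.sqrt (2 - 2 * Real.cos θ) := by
    rw [eq_div_iff hbne, hprod]
  have hbsq : Real.sqrt (2 - 2 * Real.cos θ) * Real.sqrt (2 - 2 * Real.cos θ)
      = 2 - 2 * Real.cos θ := Real.mul_self_sqrt hb2.le
  rw [abs_of_neg (by nlinarith), ha]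
  have hpi := Real.pi_pos
  rw [mul_div_assoc (1 / (2 * Real.pi)), div_div, hbsq]
  field_simp
  rw [div_eq_iff (by linarith)]
  linear_combination hpyth

lemma mass : (∫ x in (-4:ℝ)..0, (1 / (2 * Real.pi)) * Real.sqrt (4 + x) / Real.sqrt (-x)) = 1 := by
  rw [integral_of_le (by norm_num), MeasureTheory.integral_Ioc_eq_integral_Ioo,
    cov (fun x => (1 / (2 * Real.pi)) * Real.sqrt (4 + x) / Real.sqrt (-x))]
  rw [setIntegral_congr_fun measurableSet_Ioo
    (g := fun θ : ℝ => Real.pi⁻¹ * (1 + Real.cos θ))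
    (fun θ hθ => by simpa using density_cov hθ.1 hθ.2)]
  rw [← MeasureTheory.integral_Ioc_eq_integral_Ioo,
    ← integral_of_le Real.pi_pos.le, intervalIntegral.integral_const_mul]
  have : (∫ θ in (0:ℝ)..Real.pi, (1 + Real.cos θ))
      = ∫ θ in (0:ℝ)..Real.pi, ((1:ℝ) + Real.cos θ) := rfl
  rw [integral_add (intervalIntegrable_const) (Real.continuous_cos.intervalIntegrable 0 Real.pi),
    intervalIntegral.integral_const, integral_cos]
  simp [Real.pi_ne_zero]

lemma exists_r {c : ℂ} (h : ∀ x : ℝ, -2 ≤ x → x ≤ 2 → c ≠ (x:ℂ)) :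
    ∃ r : ℂ, ‖r‖ < 1 ∧ r * r - c * r + 1 = 0 := by
  obtain ⟨s, hs⟩ := IsAlgClosed.exists_pow_nat_eq (k := ℂ) (c ^ 2 - 4) two_pos
  have hmul : (c + s) / 2 * ((c - s) / 2) = 1 := by linear_combination -hs/4
  have e₁ : (c + s) / 2 * ((c + s) / 2) - c * ((c + s) / 2) + 1 = 0 := by
    linear_combination hs/4
  have e₂ : (c - s) / 2 * ((c - s) / 2) - c * ((c - s) / 2) + 1 = 0 := by
    linear_combination hs/4
  have habs : ‖(c + s) / 2‖ * ‖(c - s) / 2‖ = 1 := by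
    rw [← norm_mul, hmul, norm_one]
  rcases lt_trichotomy (‖(c + s) / 2‖) 1 with h1 | h1 | h1
  · exact ⟨_, h1, e₁⟩
  · exfalso
    have hinv : ((c + s) / 2)⁻¹ = starRingEnd ℂ ((c + s) / 2) := Complex.inv_eq_conj h1
    have hr₁0 : (c + s) / 2 ≠ 0 := by
      intro h0; rw [h0, norm_zero] at h1; norm_num at h1
    have hr2eq : (c - s) / 2 = starRingEnd ℂ ((c + s) / 2) := by
      rw [← hinv]
      exact eq_inv_of_mul_eq_one_left (by rw [mul_comm] at hmul; exact hmul)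
    have hc : c = ((2 * ((c + s) / 2).re : ℝ) : ℂ) := by
      have h2 := Complex.add_conj ((c + s) / 2)
      rw [← hr2eq] at h2
      linear_combination h2
    have hre : |((c + s) / 2).re| ≤ 1 := h1 ▸ Complex.abs_re_le_norm ((c + s) / 2)
    rw [abs_le] at hre
    exact h (2 * ((c + s) / 2).re) (by linarith [hre.1]) (by linarith [hre.2]) hc
  · refine ⟨_, ?_, e₂⟩
    nlinarith [norm_nonneg ((c - s) / 2),
      norm_nonneg ((c + s) / 2)]

lemma h2c (θ : ℝ) :
    circleMap 0 1 θ * circleMap 0 1 θ + 1 = 2 * (Real.cos θ : ℂ) * circleMap 0 1 θ := by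
  simp only [circleMap, Complex.ofReal_one, one_mul, zero_add]
  rw [Complex.exp_mul_I, Complex.ofReal_cos]
  linear_combination (Complex.sin (θ:ℂ))^2 * Complex.I_sq - Complex.sin_sq_add_cos_sq (θ:ℂ)

lemma abs_cm (θ : ℝ) : ‖circleMap 0 1 θ‖ = 1 := by
  simp [circleMap]

lemma point {c r w : ℂ} (hrw : r * w = 1) (hsum : r + w = c)
    (hr1 : ‖r‖ < 1) (hw1 : 1 < ‖w‖) (θ : ℝ) :
    (c - 2 * (Real.cos θ : ℂ))⁻¹
      = Complex.I / (r - w) *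
          (circleMap 0 1 θ * Complex.I * (circleMap 0 1 θ - r)⁻¹ -
            circleMap 0 1 θ * Complex.I * (circleMap 0 1 θ - w)⁻¹) := by
  have hu : ‖circleMap 0 1 θ‖ = 1 := abs_cm θ
  have hu0 : circleMap 0 1 θ ≠ 0 := by
    intro h; rw [h, norm_zero] at hu; norm_num at hu
  have hur : circleMap 0 1 θ - r ≠ 0 := by
    intro h; rw [sub_eq_zero] at h; rw [h] at hu; exact absurd hu (ne_of_lt hr1)
  have huw : circleMap 0 1 θ - w ≠ 0 := by
    intro h; rw [sub_eq_zero] at h; rw [h] at hu; exact absurd hu (ne_of_gt hw1)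
  have hrwne : r - w ≠ 0 := by
    intro h; rw [sub_eq_zero] at h; rw [h] at hr1; exact absurd hr1 (not_lt.2 hw1.le)
  have hfact : (c - 2 * (Real.cos θ : ℂ)) * circleMap 0 1 θ
      = -((circleMap 0 1 θ - r) * (circleMap 0 1 θ - w)) := by
    linear_combination h2c θ - circleMap 0 1 θ * hsum + hrw
  have hden : c - 2 * (Real.cos θ : ℂ) ≠ 0 := by
    intro h
    rw [h, zero_mul] at hfact
    exact mul_ne_zero hur huw (by linear_combination hfact)
  generalize hX : c - 2 * (Real.cos θ : ℂ) = X at hfact hden ⊢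
  have key : X *
      (Complex.I / (r - w) *
        (circleMap 0 1 θ * Complex.I * (circleMap 0 1 θ - r)⁻¹ -
          circleMap 0 1 θ * Complex.I * (circleMap 0 1 θ - w)⁻¹)) = 1 := by
    field_simp
    linear_combination X * circleMap 0 1 θ * (r - w) * Complex.I_mul_I - (r - w) * hfact
  exact (eq_inv_of_mul_eq_one_right key).symm

lemma circleA {r : ℂ} (hr : ‖r‖ < 1) :
    (∫ θ in (0:ℝ)..(2*Real.pi), circleMap 0 1 θ * Complex.I * (circleMap 0 1 θ - r)⁻¹)
      = 2 * Real.pi * Complex.I := by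
  have h := circleIntegral.integral_sub_inv_of_mem_ball (c := (0:ℂ)) (R := 1) (w := r)
    (by simpa using hr)
  simpa [circleIntegral, deriv_circleMap, smul_eq_mul, mul_comm, mul_assoc, mul_left_comm] using h

lemma circleB {w : ℂ} (hw : 1 < ‖w‖) :
    (∫ θ in (0:ℝ)..(2*Real.pi), circleMap 0 1 θ * Complex.I * (circleMap 0 1 θ - w)⁻¹) = 0 := by
  have hne : ∀ u : ℂ, u ∈ Metric.closedBall (0:ℂ) 1 → u - w ≠ 0 := by
    intro u hu h
    rw [sub_eq_zero] at h
    rw [Metric.mem_closedBall, dist_zero_right] at hu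
    rw [h] at hu
    exact absurd hw (not_lt.2 hu)
  have h := Complex.circleIntegral_eq_zero_of_differentiable_on_off_countable (c := (0:ℂ)) (R := 1)
    zero_le_one (Set.countable_empty) (f := fun u => (u - w)⁻¹)
    (ContinuousOn.inv₀ (by fun_prop) hne)
    (fun u hu => ((differentiableAt_id.sub_const w).inv
      (hne u (Metric.ball_subset_closedBall hu.1))))
  simpa [circleIntegral, deriv_circleMap, smul_eq_mul, mul_comm, mul_assoc, mul_left_comm] using h

lemma K2 {c r : ℂ} (hr : ‖r‖ < 1) (hq : r * r - c * r + 1 = 0) :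
    (∫ θ in (0:ℝ)..(2*Real.pi), (c - 2 * (Real.cos θ : ℂ))⁻¹)
      = 2 * Real.pi / (r⁻¹ - r) := by
  have hr0 : r ≠ 0 := by
    intro h; rw [h] at hq; norm_num at hq
  have hrw : r * r⁻¹ = 1 := mul_inv_cancel₀ hr0
  have hsum : r + r⁻¹ = c := by
    field_simp
    linear_combination hq
  have hw1 : 1 < ‖r⁻¹‖ := by
    rw [norm_inv]
    have h0 : 0 < ‖r‖ := by
      rwa [norm_pos_iff]
    exact (one_lt_inv₀ h0).2 hr
  have hne : r - r⁻¹ ≠ 0 := by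
    intro h; rw [sub_eq_zero] at h; rw [← h] at hw1; exact absurd hr (not_lt.2 hw1.le)
  have hcont : ∀ w : ℂ, ‖w‖ ≠ 1 →
      Continuous fun θ : ℝ => circleMap 0 1 θ * Complex.I * (circleMap 0 1 θ - w)⁻¹ := by
    intro w hw
    refine ((continuous_circleMap 0 1).mul continuous_const).mul
      (((continuous_circleMap 0 1).sub continuous_const).inv₀ fun θ => ?_)
    intro h
    rw [Pi.sub_apply, sub_eq_zero] at h
    exact hw (by rw [← h]; exact abs_cm θ)
  rw [integral_congr (fun θ _ => point hrw hsum hr hw1 θ)]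
  rw [intervalIntegral.integral_const_mul, integral_sub
    ((hcont r (ne_of_lt hr)).intervalIntegrable 0 (2*Real.pi))
    ((hcont r⁻¹ (ne_of_gt hw1)).intervalIntegrable 0 (2*Real.pi)),
    circleA hr, circleB hw1]
  have hne' : r⁻¹ - r ≠ 0 := fun h => hne (by rw [sub_eq_zero] at h ⊢; exact h.symm)
  rw [sub_zero, div_mul_eq_mul_div, div_eq_div_iff hne hne']
  linear_combination (2*(Real.pi:ℂ)) * (r⁻¹ - r) * Complex.I_mul_I

lemma Kpi {c r : ℂ} (hr : ‖r‖ < 1) (hq : r * r - c * r + 1 = 0)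
    (hc : ∀ θ : ℝ, c - 2 * (Real.cos θ : ℂ) ≠ 0) :
    (∫ θ in (0:ℝ)..Real.pi, (c - 2 * (Real.cos θ : ℂ))⁻¹)
      = Real.pi / (r⁻¹ - r) := by
  have hcont : Continuous fun θ : ℝ => (c - 2 * (Real.cos θ : ℂ))⁻¹ :=
    (continuous_const.sub (continuous_const.mul
      (Complex.continuous_ofReal.comp Real.continuous_cos))).inv₀ hc
  have h1 := integral_add_adjacent_intervals (μ := volume)
    (hcont.intervalIntegrable 0 Real.pi) (hcont.intervalIntegrable Real.pi (2*Real.pi))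
  have h2 : (∫ θ in Real.pi..(2*Real.pi), (c - 2 * (Real.cos θ : ℂ))⁻¹)
      = ∫ θ in (0:ℝ)..Real.pi, (c - 2 * (Real.cos θ : ℂ))⁻¹ := by
    have h3 := intervalIntegral.integral_comp_sub_left (a := (0:ℝ)) (b := Real.pi)
      (fun θ : ℝ => (c - 2 * (Real.cos θ : ℂ))⁻¹) (2*Real.pi)
    rw [(by ring : 2*Real.pi - Real.pi = Real.pi), sub_zero] at h3
    rw [← h3]
    exact integral_congr fun θ _ => by
      rw [show Real.cos (2*Real.pi - θ) = Real.cos θ by rw [Real.cos_sub]; simp]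
  rw [h2] at h1
  rw [K2 hr hq] at h1
  have h2ne : (2:ℂ) ≠ 0 := two_ne_zero
  field_simp at h1 ⊢
  linear_combination h1 / 2
theorem cauchy_transform_example' :
    (∫ x in (-4:ℝ)..0, (1 / (2 * Real.pi)) * Real.sqrt (4 + x) / Real.sqrt (-x)) = 1 ∧
    ∀ z : ℂ, z ∉ {w : ℂ | w.im = 0 ∧ -4 ≤ w.re ∧ w.re ≤ 0} →
      (∫ x in (-4:ℝ)..0,
          (((1 / (2 * Real.pi)) * Real.sqrt (4 + x) / Real.sqrt (-x) : ℝ) : ℂ) /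
            (z - (x : ℂ))) ^ 2 +
        (∫ x in (-4:ℝ)..0,
          (((1 / (2 * Real.pi)) * Real.sqrt (4 + x) / Real.sqrt (-x) : ℝ) : ℂ) /
            (z - (x : ℂ))) = 1 / z := by
  refine ⟨mass, fun z hz => ?_⟩
  have hzx : ∀ x : ℝ, -4 ≤ x → x ≤ 0 → z ≠ (x:ℂ) := by
    intro x h1 h2 h
    exact hz ⟨by simp [h], by simp [h, h1], by simp [h, h2]⟩
  have hcth : ∀ θ : ℝ, (z + 2) - 2 * (Real.cos θ : ℂ) ≠ 0 := by
    intro θ h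
    refine hzx (2 * Real.cos θ - 2) (by nlinarith [Real.neg_one_le_cos θ])
      (by nlinarith [Real.cos_le_one θ]) ?_
    push_cast at h ⊢
    linear_combination h
  have hz0 : z ≠ 0 := by
    intro h
    exact hzx 0 (by norm_num) le_rfl (by rw [h]; norm_num)
  have hz4 : z ≠ -4 := by
    intro h
    exact hzx (-4) le_rfl (by norm_num) (by rw [h]; norm_num)
  obtain ⟨r, hr, hq⟩ := exists_r (c := z + 2)
    (fun x h1 h2 h => hzx (x - 2) (by linarith) (by linarith) (by push_cast; linear_combination h))
  -- basic facts about r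
  have hr0 : r ≠ 0 := by intro h; rw [h] at hq; norm_num at hq
  have hrw : r * r⁻¹ = 1 := mul_inv_cancel₀ hr0
  have hsum : r + r⁻¹ = z + 2 := by field_simp; linear_combination hq
  have hq2 : (r⁻¹ - r) ^ 2 = (z + 2) ^ 2 - 4 := by
    have h1 : (r⁻¹ - r) ^ 2 = (r + r⁻¹) ^ 2 - 4 * (r * r⁻¹) := by ring
    rw [h1, hsum, hrw]; ring
  have hqne : r⁻¹ - r ≠ 0 := by
    intro h
    rw [h] at hq2
    have : z * (z + 4) = 0 := by linear_combination -hq2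
    rcases mul_eq_zero.1 this with h' | h'
    · exact hz0 h'
    · exact hz4 (by linear_combination h')
  have hpi : (Real.pi : ℂ) ≠ 0 := by exact_mod_cast Real.pi_ne_zero
  -- evaluate the Cauchy transform
  have hE : (∫ x in (-4:ℝ)..0,
        (((1 / (2 * Real.pi)) * Real.sqrt (4 + x) / Real.sqrt (-x) : ℝ) : ℂ) / (z - (x : ℂ)))
      = -(1/2) + (z + 4) / (2 * (r⁻¹ - r)) := by
    rw [integral_of_le (by norm_num), MeasureTheory.integral_Ioc_eq_integral_Ioo,
      cov (fun x : ℝ =>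
        (((1 / (2 * Real.pi)) * Real.sqrt (4 + x) / Real.sqrt (-x) : ℝ) : ℂ) / (z - (x : ℂ)))]
    rw [setIntegral_congr_fun measurableSet_Ioo
      (g := fun θ : ℝ => ((Real.pi⁻¹ * (1 + Real.cos θ) : ℝ) : ℂ) *
        ((z + 2) - 2 * (Real.cos θ : ℂ))⁻¹)
      (fun θ hθ => by
        have hd := density_cov hθ.1 hθ.2
        have hden : z - ((2 * Real.cos θ - 2 : ℝ) : ℂ) = (z + 2) - 2 * (Real.cos θ : ℂ) := by
          push_cast; ring
        show |(-2) * Real.sin θ| •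
            ((((1 / (2 * Real.pi)) * Real.sqrt (4 + (2 * Real.cos θ - 2)) /
              Real.sqrt (-(2 * Real.cos θ - 2)) : ℝ) : ℂ) /
                (z - ((2 * Real.cos θ - 2 : ℝ) : ℂ))) = _
        rw [Complex.real_smul, mul_div_assoc', ← Complex.ofReal_mul, hd, hden, div_eq_mul_inv])]
    rw [← MeasureTheory.integral_Ioc_eq_integral_Ioo, ← integral_of_le Real.pi_pos.le]
    rw [integral_congr (g := fun θ : ℝ => (Real.pi : ℂ)⁻¹ *
        (-(1/2) + ((z + 4)/2) * ((z + 2) - 2 * (Real.cos θ : ℂ))⁻¹))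
      (fun θ _ => by
        have h := hcth θ
        push_cast
        have h' : z + 2 - 2 * Complex.cos (θ:ℂ) ≠ 0 := by
          rw [← Complex.ofReal_cos]; exact h
        field_simp
        have hX : z + 2 - Complex.cos ↑θ * 2 ≠ 0 := by contrapose! h'; linear_combination h'
        rw [div_eq_iff hX]
        field_simp
        ring)]
    have hgc : Continuous fun θ : ℝ => ((z + 2) - 2 * (Real.cos θ : ℂ))⁻¹ :=
      (continuous_const.sub (continuous_const.mul
        (Complex.continuous_ofReal.comp Real.continuous_cos))).inv₀ hcth
    rw [intervalIntegral.integral_const_mul, integral_add intervalIntegrable_const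
      (show IntervalIntegrable (fun θ : ℝ => (z + 4) / 2 * ((z + 2) - 2 * (Real.cos θ : ℂ))⁻¹) volume 0 Real.pi from (continuous_const.mul hgc).intervalIntegrable 0 Real.pi),
      intervalIntegral.integral_const, intervalIntegral.integral_const_mul, Kpi hr hq hcth]
    rw [sub_zero, Complex.real_smul]
    field_simp
  rw [hE]
  obtain ⟨q, hqdef⟩ : ∃ q : ℂ, r⁻¹ - r = q := ⟨_, rfl⟩
  rw [hqdef] at hq2 hqne ⊢
  field_simp
  linear_combination (-(z+4)) * hq2

end CTEx

/-- The probability measure on [−4,0] with density (1/2π)·√(4+x)/√(−x) has total mass 1 and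
its Cauchy transform satisfies μ̂² + μ̂ = 1/z off [−4,0]. -/
theorem cauchy_transform_example :
    (∫ x in (-4:ℝ)..0, (1 / (2 * Real.pi)) * Real.sqrt (4 + x) / Real.sqrt (-x)) = 1 ∧
    ∀ z : ℂ, z ∉ {w : ℂ | w.im = 0 ∧ -4 ≤ w.re ∧ w.re ≤ 0} →
      (∫ x in (-4:ℝ)..0,
          (((1 / (2 * Real.pi)) * Real.sqrt (4 + x) / Real.sqrt (-x) : ℝ) : ℂ) /
            (z - (x : ℂ))) ^ 2 +
        (∫ x in (-4:ℝ)..0,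
          (((1 / (2 * Real.pi)) * Real.sqrt (4 + x) / Real.sqrt (-x) : ℝ) : ℂ) /
            (z - (x : ℂ))) = 1 / z := by
  exact CTEx.cauchy_transform_example'
end
end
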